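/- arXiv:1407.5647 — 11 statements merged into one kernel-verified Lean document; each statement's English description precedes it below -/
import Mathlib

section
/- Let R be a topological ring admitting a sequence of units converging to 0. Let M and N be Hausdorff topological R-modules each having a countable fundamental system of open neighbourhoods of 0 (equivalently, first-countable), with M complete. If u : M → N is a continuous R-linear map, N is complete, and u is surjective, then u is an open map. -/
open Filter Set Topology Pointwise

theorem omt_closure_sub {G : Type*} [AddCommGroup G] [TopologicalSpace G]
    [IsTopologicalAddGroup G] {S T : Set G} (hT : T ∈ 𝓝 (0 : G)) {z : G}
    (hz : z ∈ closure S) : ∃ w ∈ S, z - w ∈ T := by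
  have hnb : {w : G | z - w ∈ T} ∈ 𝓝 z := by
    have hc : ContinuousAt (fun w : G => z - w) z :=
      (continuous_const.sub continuous_id).continuousAt
    have := hc (by simpa using hT)
    exact this
  rcases mem_closure_iff_nhds.mp hz _ hnb with ⟨w, hw1, hw2⟩
  exact ⟨w, hw2, hw1⟩

theorem omt_baire_step
    {R : Type*} [Ring R] [TopologicalSpace R] [IsTopologicalRing R]
    (hR : ∃ r : ℕ → Rˣ, Filter.Tendsto (fun n => (r n : R)) Filter.atTop (nhds 0))
    {M N : Type*}
    [AddCommGroup M] [Module R M] [TopologicalSpace M] [IsTopologicalAddGroup M]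
    [ContinuousSMul R M]
    [AddCommGroup N] [Module R N] [UniformSpace N] [IsUniformAddGroup N]
    [ContinuousSMul R N] [FirstCountableTopology N] [CompleteSpace N]
    (u : M →ₗ[R] N) (hsurj : Function.Surjective u)
    {W : Set M} (hW : W ∈ 𝓝 (0 : M)) : closure (u '' W) ∈ 𝓝 (0 : N) := by
  have hcg : (uniformity N).IsCountablyGenerated := by
    rw [uniformity_eq_comap_nhds_zero N]
    exact Filter.comap.isCountablyGenerated _ _
  letI m : PseudoMetricSpace N := UniformSpace.pseudoMetricSpace N
  haveI : BaireSpace N := BaireSpace.of_completelyPseudoMetrizable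
  obtain ⟨V, hV, hVW⟩ : ∃ V ∈ 𝓝 (0 : M), ∀ v ∈ V, ∀ w ∈ V, v - w ∈ W := by
    rcases exists_nhds_zero_half hW with ⟨V0, hV0, h0⟩
    have hneg : -V0 ∈ 𝓝 (0 : M) := by
      have : (fun x : M => -x) ⁻¹' V0 ∈ 𝓝 (0 : M) :=
        continuous_neg.continuousAt (by simpa using hV0)
      simpa [Set.neg_preimage] using this
    refine ⟨V0 ∩ -V0, Filter.inter_mem hV0 hneg, ?_⟩
    rintro v ⟨hv, -⟩ w ⟨-, hw⟩
    have := h0 v hv (-w) (by simpa using hw)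
    simpa [sub_eq_add_neg] using this
  obtain ⟨r, hr⟩ := hR
  set C : Set N := closure (u '' V) with hC
  have hcover : (⋃ n : ℕ, ((r n)⁻¹ : Rˣ) • C) = univ := by
    apply eq_univ_iff_forall.2
    intro y
    obtain ⟨x, rfl⟩ := hsurj y
    have hx : Tendsto (fun n => (r n : R) • x) atTop (𝓝 (0 : M)) := by
      have := hr.smul_const x
      simpa using this
    obtain ⟨n, hn⟩ := (hx.eventually_mem hV).exists
    refine mem_iUnion.2 ⟨n, ?_⟩
    have hmem : u ((r n : R) • x) ∈ u '' V := mem_image_of_mem _ hn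
    have hmem2 : (r n : R) • u x ∈ C := subset_closure (by simpa using hmem)
    have : ((r n)⁻¹ : Rˣ) • ((r n : R) • u x) ∈ ((r n)⁻¹ : Rˣ) • C :=
      smul_mem_smul_set hmem2
    simpa [Units.smul_def, smul_smul] using this
  obtain ⟨n, hn⟩ : ∃ n : ℕ, (interior (((r n)⁻¹ : Rˣ) • C)).Nonempty := by
    have : Nonempty N := ⟨0⟩
    exact nonempty_interior_of_iUnion_of_closed
      (fun n => isClosed_closure.smul _) hcover
  have hCint : (interior C).Nonempty := by
    rw [interior_smul] at hn
    exact smul_set_nonempty.1 hn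
  obtain ⟨y, hy⟩ := hCint
  have hyC : y ∈ C := interior_subset hy
  have hopen : IsOpen ((fun z => z - y) '' interior C) :=
    (isOpenMap_sub_right y) _ isOpen_interior
  have h0mem : (0 : N) ∈ (fun z => z - y) '' interior C :=
    ⟨y, hy, sub_self y⟩
  refine Filter.mem_of_superset (hopen.mem_nhds h0mem) ?_
  rintro - ⟨a, ha, rfl⟩
  have haC : a ∈ C := interior_subset ha
  refine map_mem_closure₂ continuous_sub haC hyC ?_
  rintro - ⟨v, hv, rfl⟩ - ⟨w, hw, rfl⟩
  exact ⟨v - w, hVW v hv w hw, by simp⟩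

/-- **Open Mapping Theorem** (direction 1 ⇒ 4): over a topological ring with a
sequence of units converging to zero, a continuous surjective linear map between
complete, Hausdorff, first-countable topological modules is open. -/
theorem open_mapping_of_surjective
    {R : Type*} [Ring R] [TopologicalSpace R] [IsTopologicalRing R]
    (hR : ∃ r : ℕ → Rˣ, Filter.Tendsto (fun n => (r n : R)) Filter.atTop (nhds 0))
    {M N : Type*}
    [AddCommGroup M] [Module R M] [UniformSpace M] [IsUniformAddGroup M]
    [ContinuousSMul R M] [T2Space M] [FirstCountableTopology M]
    [CompleteSpace M]
    [AddCommGroup N] [Module R N] [UniformSpace N] [IsUniformAddGroup N]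
    [ContinuousSMul R N] [T2Space N] [FirstCountableTopology N]
    [CompleteSpace N]
    (u : M →ₗ[R] N) (hu : Continuous u) (hsurj : Function.Surjective u) :
    IsOpenMap u := by
  -- Key step: images of neighbourhoods of 0 are neighbourhoods of 0.
  have key : ∀ W ∈ 𝓝 (0 : M), u '' W ∈ 𝓝 (0 : N) := by
    intro W hW
    -- antitone bases of neighbourhoods of 0 in M and N
    obtain ⟨P, hP⟩ := (𝓝 (0 : M)).exists_antitone_basis
    obtain ⟨O, hO⟩ := (𝓝 (0 : N)).exists_antitone_basis
    -- build a chain of neighbourhoods V n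
    have exV : ∀ S : Set M, S ∈ 𝓝 (0 : M) → ∀ n : ℕ,
        ∃ T, T ∈ 𝓝 (0 : M) ∧ T + T ⊆ S ∧ T ⊆ P n ∧ T ⊆ u ⁻¹' (O n) := by
      intro S hS n
      rcases exists_nhds_zero_half hS with ⟨T0, hT0, h0⟩
      have hPn : P n ∈ 𝓝 (0 : M) := hP.mem n
      have hOn : u ⁻¹' (O n) ∈ 𝓝 (0 : M) := by
        have := hu.continuousAt (x := (0 : M)) (by simpa [map_zero] using hO.mem n)
        simpa [map_zero] using this
      refine ⟨T0 ∩ (P n ∩ u ⁻¹' (O n)), Filter.inter_mem hT0 (Filter.inter_mem hPn hOn),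
        ?_, fun x hx => hx.2.1, fun x hx => hx.2.2⟩
      rintro x ⟨a, ⟨ha, -⟩, b, ⟨hb, -⟩, rfl⟩
      exact h0 a ha b hb
    choose! T hT1 hT2 hT3 hT4 using exV
    set V : ℕ → Set M := fun n => Nat.rec (T W 0) (fun n Vn => T Vn (n + 1)) n with hVdef
    have hVmem : ∀ n, V n ∈ 𝓝 (0 : M) := by
      intro n
      induction n with
      | zero => exact hT1 W hW 0
      | succ k ih => exact hT1 (V k) ih (k + 1)
    have hV0 : V 0 + V 0 ⊆ W := hT2 W hW 0
    have hVchain : ∀ n, V (n + 1) + V (n + 1) ⊆ V n := fun n => hT2 (V n) (hVmem n) (n + 1)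
    have hVP : ∀ n, V n ⊆ P n := by
      intro n
      cases n with
      | zero => exact hT3 W hW 0
      | succ k => exact hT3 (V k) (hVmem k) (k + 1)
    have hVO : ∀ n, V n ⊆ u ⁻¹' (O n) := by
      intro n
      cases n with
      | zero => exact hT4 W hW 0
      | succ k => exact hT4 (V k) (hVmem k) (k + 1)
    have hV0mem : ∀ n, (0 : M) ∈ V n := fun n => mem_of_mem_nhds (hVmem n)
    -- closures of images of the V n are neighbourhoods of 0 in N
    have hcl : ∀ n, closure (u '' V n) ∈ 𝓝 (0 : N) :=
      fun n => omt_baire_step hR u hsurj (hVmem n)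
    -- main claim: closure (u '' V 1) ⊆ u '' W
    have main : closure (u '' V 1) ⊆ u '' W := by
      intro y hy
      -- construct partial sums
      have step : ∀ n : ℕ, ∀ s : M, y - u s ∈ closure (u '' V (n + 1)) →
          ∃ x, x ∈ V (n + 1) ∧ y - u (s + x) ∈ closure (u '' V (n + 2)) := by
        intro n s hs
        rcases omt_closure_sub (hcl (n + 2)) hs with ⟨w, ⟨x, hx, rfl⟩, hw⟩
        exact ⟨x, hx, by simpa [map_add, sub_sub] using hw⟩
      choose! xf hxf1 hxf2 using step
      set s : ℕ → M := fun n => Nat.rec 0 (fun n sn => sn + xf n sn) n with hsdef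
      have hsinv : ∀ n, y - u (s n) ∈ closure (u '' V (n + 1)) := by
        intro n
        induction n with
        | zero =>
          have hs0 : s 0 = 0 := rfl
          rw [hs0]
          simpa [map_zero] using hy
        | succ k ih => exact hxf2 k (s k) ih
      have hstep : ∀ n, s (n + 1) - s n ∈ V (n + 1) := by
        intro n
        have : s (n + 1) = s n + xf n (s n) := rfl
        rw [this, add_sub_cancel_left]
        exact hxf1 n (s n) (hsinv n)
      -- differences of partial sums lie in V a
      have hsum : ∀ k a, s (a + k) - s a ∈ V a := by
        intro k
        induction k with
        | zero => intro a; simpa using hV0mem a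
        | succ k ih =>
          intro a
          have h1 : s ((a + 1) + k) - s (a + 1) ∈ V (a + 1) := ih (a + 1)
          have h2 : s (a + 1) - s a ∈ V (a + 1) := hstep a
          have h3 : (s ((a + 1) + k) - s (a + 1)) + (s (a + 1) - s a) ∈ V a :=
            hVchain a (add_mem_add h1 h2)
          have heq : (s ((a + 1) + k) - s (a + 1)) + (s (a + 1) - s a)
              = s (a + (k + 1)) - s a := by
            have : (a + 1) + k = a + (k + 1) := by omega
            rw [this]; abel
          rwa [heq] at h3
      -- s is Cauchy
      have hcauchy : CauchySeq s := by
        rw [cauchySeq_iff]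
        intro Vu hVu
        rw [uniformity_eq_comap_nhds_zero M] at hVu
        rcases hVu with ⟨U, hU, hUV⟩
        have hUneg : -U ∈ 𝓝 (0 : M) := by
          have : (fun x : M => -x) ⁻¹' U ∈ 𝓝 (0 : M) :=
            continuous_neg.continuousAt (by simpa using hU)
          simpa [Set.neg_preimage] using this
        obtain ⟨a, -, hPa⟩ := hP.1.mem_iff.mp (Filter.inter_mem hU hUneg)
        refine ⟨a, fun k hk l hl => ?_⟩
        apply hUV
        have hkey : ∀ i j : ℕ, a ≤ i → i ≤ j → s j - s i ∈ U ∩ -U := by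
          intro i j hai hij
          have : s (i + (j - i)) - s i ∈ V i := hsum (j - i) i
          rw [Nat.add_sub_cancel' hij] at this
          exact hPa (hP.2 hai (hVP i this))
        simp only [Set.mem_preimage]
        rcases le_total k l with h | h
        · exact (hkey k l hk h).1
        · have := (hkey l k hl h).2
          simpa using this
      rcases cauchySeq_tendsto_of_complete hcauchy with ⟨mlim, hml⟩
      -- mlim ∈ W
      have hsV0 : ∀ n, s n ∈ V 0 := by
        intro n
        have h := hsum n 0
        have h0 : s 0 = 0 := rfl
        rw [h0, sub_zero] at h
        simpa using h
      have hmcl : mlim ∈ closure (V 0) :=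
        mem_closure_of_tendsto hml (Filter.Eventually.of_forall hsV0)
      have hmW : mlim ∈ W := by
        rcases omt_closure_sub (hVmem 0) hmcl with ⟨w, hw, hw2⟩
        have : w + (mlim - w) ∈ W := hV0 (add_mem_add hw hw2)
        simpa using this
      -- u mlim = y
      have h1 : Tendsto (fun n => u (s n)) atTop (𝓝 (u mlim)) :=
        (hu.tendsto mlim).comp hml
      have hres : Tendsto (fun n => y - u (s n)) atTop (𝓝 (0 : N)) := by
        refine hO.1.tendsto_right_iff.mpr fun i _ => ?_
        have hOi : O i ∈ 𝓝 (0 : N) := hO.1.mem_of_mem trivial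
        rcases exists_nhds_zero_half hOi with ⟨Q, hQ, hQ2⟩
        obtain ⟨a, -, hOa⟩ := hO.1.mem_iff.mp hQ
        filter_upwards [Filter.eventually_ge_atTop a] with n hn
        rcases omt_closure_sub hQ (hsinv n) with ⟨w, hwmem, hw2⟩
        have hwO : w ∈ Q := by
          apply hOa
          apply hO.2 (by omega : a ≤ n + 1)
          rcases hwmem with ⟨x, hx, rfl⟩
          exact hVO (n + 1) hx
        have := hQ2 w hwO _ hw2
        simpa using this
      have h2 : Tendsto (fun n => u (s n)) atTop (𝓝 y) := by
        have := hres.const_sub y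
        simpa using this
      exact ⟨mlim, hmW, tendsto_nhds_unique h1 h2⟩
    have : closure (u '' V 1) ∈ 𝓝 (0 : N) := hcl 1
    exact Filter.mem_of_superset this main
  -- conclude openness
  rw [isOpenMap_iff_nhds_le]
  intro x
  have h0 : (𝓝 (0 : N)) ≤ Filter.map u (𝓝 (0 : M)) :=
    Filter.le_map fun s hs => key s hs
  calc 𝓝 (u x) = Filter.map (u x + ·) (𝓝 0) := (map_add_left_nhds_zero (u x)).symm
    _ ≤ Filter.map (u x + ·) (Filter.map u (𝓝 0)) := Filter.map_mono h0
    _ = Filter.map u (Filter.map (x + ·) (𝓝 0)) := by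
        simp only [Filter.map_map]
        congr 1
        ext m
        simp [map_add]
    _ = Filter.map u (𝓝 x) := by rw [map_add_left_nhds_zero]
end

section
/- Let R be a topological ring admitting a sequence (r_n) of units converging to 0. Let M and N be topological R-modules and u : M → N an R-linear map such that the image u(M) is not a meagre subset of N. Then for every neighbourhood V of 0 in M, the closure of u(V) in N is a neighbourhood of 0 in N. -/
open Pointwise


/-- If `R` has a sequence of units converging to `0`, `u : M → N` is linear and its
image is not meagre in `N`, then for every neighbourhood `V` of `0` in `M` the closure
of `u(V)` is a neighbourhood of `0` in `N`. -/
theorem closure_image_nhds_of_not_meagre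
    {R : Type*} [Ring R] [TopologicalSpace R] [IsTopologicalRing R]
    (hR : ∃ r : ℕ → Rˣ, Filter.Tendsto (fun n => (r n : R)) Filter.atTop (nhds 0))
    {M N : Type*}
    [AddCommGroup M] [Module R M] [TopologicalSpace M] [IsTopologicalAddGroup M]
    [ContinuousSMul R M]
    [AddCommGroup N] [Module R N] [TopologicalSpace N] [IsTopologicalAddGroup N]
    [ContinuousSMul R N]
    (u : M →ₗ[R] N) (h : ¬ IsMeagre (Set.range u)) :
    ∀ V ∈ nhds (0 : M), closure (u '' V) ∈ nhds (0 : N) := by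
  obtain ⟨r, hr⟩ := hR
  intro V hV
  obtain ⟨W, hW, hWV⟩ := exists_nhds_half_neg hV
  set S : Set N := u '' W with hS
  -- the range of `u` is covered by the closures of `(r n)⁻¹ • S`
  have hcover : Set.range u ⊆ ⋃ n, closure (((r n)⁻¹ : Rˣ) • S) := by
    rintro _ ⟨m, rfl⟩
    have htend : Filter.Tendsto (fun n => (r n : R) • m) Filter.atTop (nhds 0) := by
      have := hr.smul_const m
      simpa using this
    obtain ⟨n, hn⟩ := (htend.eventually_mem hW).exists
    refine Set.mem_iUnion.2 ⟨n, subset_closure ?_⟩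
    refine ⟨u ((r n : R) • m), ⟨(r n : R) • m, hn, rfl⟩, ?_⟩
    show ((r n)⁻¹ : Rˣ) • u ((r n : R) • m) = u m
    rw [map_smul, Units.smul_def, smul_smul, Units.inv_mul, one_smul]
  -- some closure has nonempty interior
  have hne : ∃ n, (interior (closure (((r n)⁻¹ : Rˣ) • S))).Nonempty := by
    by_contra hc
    push_neg at hc
    apply h
    refine IsMeagre.mono hcover (isMeagre_iUnion fun n => ?_)
    rw [isMeagre_iff_countable_union_isNowhereDense]
    refine ⟨{closure (((r n)⁻¹ : Rˣ) • S)}, ?_, Set.countable_singleton _, ?_⟩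
    · rintro t rfl
      rw [IsClosed.isNowhereDense_iff isClosed_closure]
      exact hc n
    · simp
  obtain ⟨n, y, hy⟩ := hne
  -- transfer to `closure S` using the unit action homeomorphism
  have hkey : (interior (closure S)).Nonempty := by
    rw [closure_smul, interior_smul] at hy
    exact (Set.smul_set_nonempty.1 ⟨y, hy⟩)
  obtain ⟨y, hy⟩ := hkey
  -- conclude: `closure S - closure S ⊆ closure (u '' V)` and translation gives a nhd of 0
  have hsubV : S - S ⊆ u '' V := by
    rintro _ ⟨a, ha, b, hb, rfl⟩
    obtain ⟨wa, hwa, rfl⟩ := ha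
    obtain ⟨wb, hwb, rfl⟩ := hb
    exact ⟨wa - wb, hWV _ hwa _ hwb, map_sub u wa wb⟩
  have hsub : closure S - closure S ⊆ closure (u '' V) := by
    rintro _ ⟨a, ha, b, hb, rfl⟩
    have : a - b ∈ closure (S - S) := by
      have := map_mem_closure₂ continuous_sub ha hb
        (fun x hx z hz => Set.sub_mem_sub hx hz)
      simpa using this
    exact closure_mono hsubV this
  rw [mem_nhds_iff]
  refine ⟨(· + y) ⁻¹' interior (closure S), ?_, (isOpen_interior).preimage (by continuity), by simpa⟩
  intro z hz
  have : z = (z + y) - y := by abel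
  rw [this]
  exact hsub (Set.sub_mem_sub (interior_subset hz) (interior_subset hy))
end

section
/- Let M and N be Hausdorff topological groups each having a countable fundamental system of open neighbourhoods of the identity, with M complete. Let u : M → N be a continuous group homomorphism such that for every neighbourhood V of the identity in M, the closure of u(V) is a neighbourhood of the identity in N. Then u is an open map. -/
open Filter Set Topology Uniformity
open scoped Pointwise

/-- If `M` is a complete metrisable topological group, `N` a Hausdorff first-countable
topological group, and `u : M → N` a continuous homomorphism such that the closure of the
image of each neighbourhood of the identity is a neighbourhood of the identity, then `u`
is open. -/
theorem isOpenMap_of_closure_image_nhds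
    {M N : Type*}
    [Group M] [UniformSpace M] [IsUniformGroup M] [T2Space M]
    [FirstCountableTopology M] [CompleteSpace M]
    [Group N] [TopologicalSpace N] [IsTopologicalGroup N] [T2Space N]
    [FirstCountableTopology N]
    (u : M →* N) (hu : Continuous u)
    (h : ∀ V ∈ nhds (1 : M), closure (u '' V) ∈ nhds (1 : N)) :
    IsOpenMap u := by
  -- Main step: the image of every neighbourhood of `1` in `M` is a neighbourhood of `1` in `N`.
  have key : ∀ W ∈ 𝓝 (1 : M), u '' W ∈ 𝓝 (1 : N) := by
    intro W hW
    obtain ⟨C, hC_nhds, hC_closed, hCW⟩ := exists_mem_nhds_isClosed_subset hW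
    obtain ⟨V0, hV0, V0_mul⟩ := IsTopologicalGroup.exists_antitone_basis_nhds_one M
    obtain ⟨k, -, hkC⟩ := hV0.toHasBasis.mem_iff.1 hC_nhds
    -- a symmetric antitone basis `V` inside `C` with `V (n+1) * V (n+1) ⊆ V n`
    set V : ℕ → Set M := fun n => V0 (n + k) ∩ (V0 (n + k))⁻¹ with hVdef
    have hVmem : ∀ n, V n ∈ 𝓝 (1 : M) := by
      intro n
      refine inter_mem (hV0.toHasBasis.mem_of_mem trivial) ?_
      have e : (V0 (n + k))⁻¹ = Inv.inv ⁻¹' (V0 (n + k)) := rfl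
      rw [e]
      exact (continuous_inv.continuousAt (x := (1 : M))).preimage_mem_nhds
        (by simpa using hV0.toHasBasis.mem_of_mem (i := n + k) trivial)
    have V_symm : ∀ n, (V n)⁻¹ = V n := by
      intro n
      ext a
      simp only [hVdef, Set.mem_inv, Set.mem_inter_iff, inv_inv]
      tauto
    have V_anti : ∀ m n, m ≤ n → V n ⊆ V m := by
      intro m n hmn
      have h1 : V0 (n + k) ⊆ V0 (m + k) := hV0.antitone (by omega)
      exact Set.inter_subset_inter h1 (Set.inv_subset_inv.2 h1)
    have V_mul : ∀ n, V (n + 1) * V (n + 1) ⊆ V n := by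
      intro n
      have hsub : V (n + 1) ⊆ V0 (n + k + 1) := fun a ha =>
        hV0.antitone (by omega : n + k + 1 ≤ n + 1 + k) ha.1
      have h1 : V (n + 1) * V (n + 1) ⊆ V0 (n + k) := fun a ha =>
        V0_mul (n + k) (Set.mul_subset_mul hsub hsub ha)
      intro a ha
      refine ⟨h1 ha, ?_⟩
      rw [Set.mem_inv]
      apply h1
      obtain ⟨b, hb, c, hc, rfl⟩ := ha
      rw [mul_inv_rev]
      exact Set.mul_mem_mul (by rw [← Set.mem_inv, V_symm]; exact hc)
        (by rw [← Set.mem_inv, V_symm]; exact hb)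
    have V_sub_C : ∀ n, V n ⊆ C := fun n =>
      Set.inter_subset_left.trans ((hV0.antitone (by omega)).trans hkC)
    have V_basis : ∀ S ∈ 𝓝 (1 : M), ∃ n, V n ⊆ S := by
      intro S hS
      obtain ⟨j, -, hj⟩ := hV0.toHasBasis.mem_iff.1 hS
      exact ⟨j, Set.inter_subset_left.trans ((hV0.antitone (by omega)).trans hj)⟩
    have hone : ∀ n, (1 : M) ∈ V n := fun n => mem_of_mem_nhds (hVmem n)
    -- the key claim
    have claim : closure (u '' V 1) ⊆ u '' W := by
      intro y hy
      -- one-step approximation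
      have step : ∀ n, ∀ z ∈ closure (u '' V (n + 1)),
          ∃ x ∈ V (n + 1), (u x)⁻¹ * z ∈ closure (u '' V (n + 2)) := by
        intro n z hz
        have hT : closure (u '' V (n + 2)) ∈ 𝓝 (1 : N) := h _ (hVmem _)
        have hcont : ContinuousAt (fun w : N => w⁻¹ * z) z :=
          (continuous_inv.mul continuous_const).continuousAt
        have hmem : (fun w : N => w⁻¹ * z) ⁻¹' closure (u '' V (n + 2)) ∈ 𝓝 z :=
          hcont.preimage_mem_nhds (by simpa using hT)
        obtain ⟨w, hw1, hw2⟩ := mem_closure_iff_nhds.1 hz _ hmem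
        obtain ⟨x, hx, rfl⟩ := hw2
        exact ⟨x, hx, hw1⟩
      choose! xfun hx1 hx2 using step
      -- construct the sequences
      let z : ℕ → N := fun n => Nat.rec y (fun m zm => (u (xfun m zm))⁻¹ * zm) n
      have hz : ∀ n, z n ∈ closure (u '' V (n + 1)) := by
        intro n
        induction n with
        | zero => exact hy
        | succ m ih => exact hx2 m (z m) ih
      let x : ℕ → M := fun n => xfun n (z n)
      have hxV : ∀ n, x n ∈ V (n + 1) := fun n => hx1 n (z n) (hz n)
      have hzsucc : ∀ n, z (n + 1) = (u (x n))⁻¹ * z n := fun n => rfl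
      let p : ℕ → M := fun n => Nat.rec 1 (fun m pm => pm * x m) n
      have hp0 : p 0 = 1 := rfl
      have hpsucc : ∀ n, p (n + 1) = p n * x n := fun n => rfl
      have hz0 : z 0 = y := rfl
      have hzp : ∀ n, z n = (u (p n))⁻¹ * y := by
        intro n
        induction n with
        | zero => rw [hz0, hp0, map_one, inv_one, one_mul]
        | succ m ih =>
          rw [hzsucc, ih, hpsucc, map_mul, mul_inv_rev, mul_assoc]
      -- telescoping estimate
      have Q : ∀ j n, (p n)⁻¹ * p (n + j) ∈ V n := by
        intro j
        induction j with
        | zero => intro n; simpa using hone n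
        | succ m ih =>
          intro n
          have e : (p n)⁻¹ * p ((n + 1) + m) =
              ((p n)⁻¹ * p (n + 1)) * ((p (n + 1))⁻¹ * p ((n + 1) + m)) := by
            group
          rw [show n + (m + 1) = (n + 1) + m by omega, e]
          apply V_mul n
          refine Set.mul_mem_mul ?_ (ih (n + 1))
          rw [hpsucc, inv_mul_cancel_left]
          exact hxV n
      -- the sequence `p` is Cauchy
      have hVb : (𝓝 (1 : M)).HasBasis (fun _ : ℕ => True) V :=
        ⟨fun S => ⟨fun hS => (V_basis S hS).imp fun n hn => ⟨trivial, hn⟩,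
          fun ⟨n, _, hn⟩ => mem_of_superset (hVmem n) hn⟩⟩
      have hU : (𝓤 M).HasBasis (fun _ : ℕ => True)
          (fun i => (fun q : M × M => q.1⁻¹ * q.2) ⁻¹' V i) := by
        rw [uniformity_eq_comap_inv_mul_nhds_one]
        exact hVb.comap _
      have hcauchy : CauchySeq p := by
        rw [hU.cauchySeq_iff']
        intro i _
        refine ⟨i, fun n hn => ?_⟩
        rw [Set.mem_preimage, ← V_symm i, Set.mem_inv, mul_inv_rev, inv_inv]
        obtain ⟨j, rfl⟩ := Nat.exists_eq_add_of_le hn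
        exact Q j i
      obtain ⟨xlim, hxlim⟩ := cauchySeq_tendsto_of_complete hcauchy
      -- the limit lies in `W`
      have hpV0 : ∀ n, p n ∈ V 0 := by
        intro n
        have := Q n 0
        simpa [hp0] using this
      have hxlimC : xlim ∈ C :=
        hC_closed.mem_of_tendsto hxlim (Filter.Eventually.of_forall fun n => V_sub_C 0 (hpV0 n))
      -- `u (p n) → u xlim`
      have h1 : Tendsto (fun n => u (p n)) atTop (𝓝 (u xlim)) :=
        (hu.tendsto xlim).comp hxlim
      -- `z n → 1`
      have hz1 : Tendsto z atTop (𝓝 (1 : N)) := by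
        rw [Filter.tendsto_def]
        intro s hs
        obtain ⟨T', hT'_nhds, hT'_closed, hT's⟩ := exists_mem_nhds_isClosed_subset hs
        have hpre : u ⁻¹' T' ∈ 𝓝 (1 : M) :=
          hu.continuousAt.preimage_mem_nhds (by rw [map_one]; exact hT'_nhds)
        obtain ⟨k₀, hk₀⟩ := V_basis _ hpre
        refine mem_atTop_sets.2 ⟨k₀, fun n hn => ?_⟩
        have h2 : u '' V (n + 1) ⊆ T' :=
          (Set.image_mono (f := u) (V_anti k₀ (n + 1) (by omega))).trans
            (by rw [Set.image_subset_iff]; exact hk₀)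
        exact hT's (closure_minimal h2 hT'_closed (hz n))
      -- `u (p n) → y`
      have h2 : Tendsto (fun n => u (p n)) atTop (𝓝 y) := by
        have e : (fun n => u (p n)) = fun n => y * (z n)⁻¹ := by
          funext n; rw [hzp n]; group
        rw [e]
        simpa using tendsto_const_nhds.mul hz1.inv
      exact ⟨xlim, hCW hxlimC, tendsto_nhds_unique h1 h2⟩
    exact mem_of_superset (h (V 1) (hVmem 1)) claim
  -- deduce openness by translation
  intro U hU
  rw [isOpen_iff_mem_nhds]
  rintro _ ⟨m, hm, rfl⟩
  have hWm : (fun x => m * x) ⁻¹' U ∈ 𝓝 (1 : M) :=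
    (continuous_mul_left m).continuousAt.preimage_mem_nhds (by simpa using hU.mem_nhds hm)
  have himg := key _ hWm
  have h2 : u m • (u '' ((fun x => m * x) ⁻¹' U)) ∈ 𝓝 (u m • (1 : N)) :=
    (smul_mem_nhds_smul_iff (u m)).2 himg
  rw [smul_eq_mul, mul_one] at h2
  refine mem_of_superset h2 ?_
  intro a ha
  obtain ⟨b, hb, rfl⟩ := Set.mem_smul_set.1 ha
  obtain ⟨w, hw, rfl⟩ := hb
  exact ⟨m * w, hw, by simp [map_mul]⟩
end

section
/- Let R be a topological ring such that every neighbourhood of 0 in R contains a unit. Let M and N be Hausdorff topological R-modules such that M is complete and has a countable fundamental system of open neighbourhoods of 0. If u : M → N is a linear, continuous, and open map, then u is surjective and N is complete and has a countable fundamental system of open neighbourhoods of 0. -/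
/-- If `R` has a unit in every neighbourhood of `0`, `M` is a complete Hausdorff
first-countable topological `R`-module, `N` a Hausdorff topological `R`-module and
`u : M → N` is linear, continuous and open, then `u` is surjective and `N` is complete
with a countable fundamental system of neighbourhoods of `0`. -/
theorem surjective_complete_of_open
    {R : Type*} [Ring R] [TopologicalSpace R] [IsTopologicalRing R]
    (hR : ∀ U ∈ nhds (0 : R), ∃ r : Rˣ, (r : R) ∈ U)
    {M N : Type*}
    [AddCommGroup M] [Module R M] [UniformSpace M] [IsUniformAddGroup M]
    [ContinuousSMul R M] [T2Space M] [FirstCountableTopology M]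
    [CompleteSpace M]
    [AddCommGroup N] [Module R N] [UniformSpace N] [IsUniformAddGroup N]
    [ContinuousSMul R N] [T2Space N]
    (u : M →ₗ[R] N) (hu : Continuous u) (hopen : IsOpenMap u) :
    Function.Surjective u ∧ CompleteSpace N ∧
      FirstCountableTopology N := by
  -- The range of `u` is an open submodule.
  have hrange_open : IsOpen ((LinearMap.range u : Submodule R N) : Set N) := by
    have : ((LinearMap.range u : Submodule R N) : Set N) = u '' Set.univ := by
      ext x; simp [LinearMap.mem_range]
    rw [this]
    exact hopen _ isOpen_univ
  -- Surjectivity: for `n : N`, the map `r ↦ r • n` is continuous at `0`, and the range of `u`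
  -- is an open neighbourhood of `0`; pick a unit `r` with `r • n ∈ range u`.
  have hs : Function.Surjective u := by
    intro n
    have hcont : Continuous fun r : R => r • n := continuous_id.smul continuous_const
    have hmem : ((fun r : R => r • n) ⁻¹' (LinearMap.range u : Submodule R N)) ∈ nhds (0 : R) := by
      apply hcont.continuousAt.preimage_mem_nhds
      rw [zero_smul]
      exact hrange_open.mem_nhds (Submodule.zero_mem _)
    obtain ⟨r, hr⟩ := hR _ hmem
    have : (r : R) • n ∈ LinearMap.range u := hr
    have h2 : ((r⁻¹ : Rˣ) : R) • ((r : R) • n) ∈ LinearMap.range u :=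
      Submodule.smul_mem _ _ this
    rw [smul_smul, Units.inv_mul, one_smul] at h2
    exact h2
  -- The quotient by the kernel.
  set K : AddSubgroup M := (LinearMap.ker u).toAddSubgroup with hK
  have hker : ∀ x ∈ K, u.toAddMonoidHom x = 0 := fun x hx => hx
  set φ : M ⧸ K →+ N := QuotientAddGroup.lift K u.toAddMonoidHom hker with hφ
  have hφmk : ∀ m : M, φ (QuotientAddGroup.mk m) = u m := fun m => rfl
  have hφinj : Function.Injective φ := by
    rw [injective_iff_map_eq_zero]
    intro q hq
    obtain ⟨m, rfl⟩ := QuotientAddGroup.mk_surjective q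
    rw [hφmk] at hq
    exact (QuotientAddGroup.eq_zero_iff m).2 hq
  have hφsurj : Function.Surjective φ := fun n => by
    obtain ⟨m, hm⟩ := hs n
    exact ⟨QuotientAddGroup.mk m, hm⟩
  have hφbij : Function.Bijective φ := ⟨hφinj, hφsurj⟩
  have hφcont : Continuous φ := continuous_quot_lift _ hu
  have hφopen : IsOpenMap φ := by
    intro U hU
    have himg : φ '' U = u '' ((QuotientAddGroup.mk : M → M ⧸ K) ⁻¹' U) := by
      ext n
      constructor
      · rintro ⟨q, hq, rfl⟩
        obtain ⟨m, rfl⟩ := QuotientAddGroup.mk_surjective q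
        exact ⟨m, hq, rfl⟩
      · rintro ⟨m, hm, rfl⟩
        exact ⟨QuotientAddGroup.mk m, hm, rfl⟩
    rw [himg]
    exact hopen _ (hU.preimage continuous_quot_mk)
  -- The induced homeomorphism.
  set e : (M ⧸ K) ≃ₜ N :=
    Equiv.toHomeomorphOfContinuousOpen (Equiv.ofBijective φ hφbij) hφcont hφopen with he
  -- First countability of N.
  haveI hfc : FirstCountableTopology N :=
    e.symm.isInducing.firstCountableTopology
  -- Completeness of N.
  have hcomp : CompleteSpace N := by
    -- The quotient is complete with the canonical uniform structure.
    haveI hQ : @CompleteSpace (M ⧸ K) (IsTopologicalAddGroup.rightUniformSpace (M ⧸ K)) :=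
      QuotientAddGroup.completeSpace_right M K
    -- N's uniform structure agrees with the canonical one.
    have hNu : IsTopologicalAddGroup.rightUniformSpace N = ‹UniformSpace N› :=
      IsUniformAddGroup.rightUniformSpace_eq
    letI uQ : UniformSpace (M ⧸ K) := IsTopologicalAddGroup.rightUniformSpace (M ⧸ K)
    haveI : IsUniformAddGroup (M ⧸ K) := isUniformAddGroup_of_addCommGroup
    -- φ and its inverse are uniformly continuous additive homeomorphisms.
    set ψ : (M ⧸ K) ≃+ N := AddEquiv.ofBijective φ hφbij with hψ
    have hψc : UniformContinuous (ψ : (M ⧸ K) →+ N) :=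
      (ψ : (M ⧸ K) →+ N).uniformContinuous_of_continuousAt_zero hφcont.continuousAt
    have hψsc : UniformContinuous (ψ.symm : N →+ M ⧸ K) :=
      (ψ.symm : N →+ M ⧸ K).uniformContinuous_of_continuousAt_zero
        (e.symm.continuous.continuousAt)
    have eqv : (M ⧸ K) ≃ᵤ N :=
      { toEquiv := ψ.toEquiv
        uniformContinuous_toFun := hψc
        uniformContinuous_invFun := hψsc }
    exact eqv.completeSpace_iff.mp hQ
  exact ⟨hs, hcomp, hfc⟩
end

section
/- Let M and N be metric spaces with M complete, and let u : M → N be a continuous map. Suppose there is a function ρ : ℝ_{>0} → ℝ_{>0} such that for every r > 0 and every x ∈ M, the closed ball of radius ρ(r) around u(x) is contained in the closure of u(B_r(x)), where B_r(x) is the closed ball of radius r around x. Then for every r > 0, every a > r, and every x ∈ M, the closed ball of radius ρ(r) around u(x) is contained in u(B_a(x)). -/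
open Metric Filter

/-- If `M` is complete and a continuous map `u : M → N` of metric spaces satisfies
`B_{ρ(r)}(u x) ⊆ closure (u '' B_r(x))` for all `x` and `r > 0`, then
`B_{ρ(r)}(u x) ⊆ u '' B_a(x)` for all `a > r`. -/
theorem closedBall_subset_image_of_closure
    {M N : Type*} [MetricSpace M] [MetricSpace N] [CompleteSpace M]
    (u : M → N) (hu : Continuous u) (ρ : ℝ → ℝ) (hρ : ∀ r > 0, ρ r > 0)
    (h : ∀ r > 0, ∀ x : M,
      Metric.closedBall (u x) (ρ r) ⊆ closure (u '' Metric.closedBall x r)) :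
    ∀ r > 0, ∀ a > r, ∀ x : M,
      Metric.closedBall (u x) (ρ r) ⊆ u '' Metric.closedBall x a := by
  intro r hr a ha x y hy
  set s : ℕ → ℝ := fun n => if n = 0 then r else (a - r) / 2 ^ (n + 1) with hs_def
  have har : 0 < a - r := by linarith
  have s_pos : ∀ n, 0 < s n := by
    intro n
    by_cases hn : n = 0 <;> simp [hs_def, hn] <;> linarith
  have hshift : (fun n : ℕ => s (n + 1)) = fun n => ((a - r) / 4) * (1 / 2 : ℝ) ^ n := by
    funext n
    simp only [hs_def, Nat.add_eq_zero, Nat.succ_ne_zero, false_and, if_false, pow_succ]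
    simp only [one_div]
    rw [inv_pow]; ring
  have key : ∀ n (z : M), dist (u z) y ≤ ρ (s n) →
      ∃ z', dist z z' ≤ s n ∧ dist (u z') y ≤ min (ρ (s (n + 1))) (s (n + 1)) := by
    intro n z hz
    have hymem : y ∈ closure (u '' Metric.closedBall z (s n)) :=
      h (s n) (s_pos n) z (by simpa [Metric.mem_closedBall, dist_comm] using hz)
    have hε : 0 < min (ρ (s (n + 1))) (s (n + 1)) :=
      lt_min (hρ _ (s_pos (n + 1))) (s_pos (n + 1))
    obtain ⟨b, hb, hdb⟩ := Metric.mem_closure_iff.mp hymem _ hε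
    obtain ⟨z', hz', rfl⟩ := hb
    exact ⟨z', by simpa [Metric.mem_closedBall, dist_comm] using hz',
      by rw [dist_comm]; exact hdb.le⟩
  choose f hf1 hf2 using key
  have hx0 : dist (u x) y ≤ ρ (s 0) := by
    simpa [hs_def, dist_comm] using hy
  let seq' : (n : ℕ) → {z : M // dist (u z) y ≤ ρ (s n)} :=
    fun n => Nat.rec ⟨x, hx0⟩
      (fun n p => ⟨f n p.1 p.2, le_trans (hf2 n p.1 p.2) (min_le_left _ _)⟩) n
  set seq : ℕ → M := fun n => (seq' n).1 with hseq
  have hstep : ∀ n, dist (seq n) (seq (n + 1)) ≤ s n := fun n => hf1 n _ _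
  have htail : ∀ n, dist (u (seq (n + 1))) y ≤ s (n + 1) := fun n =>
    le_trans (hf2 n _ _) (min_le_right _ _)
  have hsummable : Summable s := by
    rw [← summable_nat_add_iff 1, hshift]
    exact summable_geometric_two.mul_left _
  have hcauchy : CauchySeq seq := cauchySeq_of_dist_le_of_summable s hstep hsummable
  obtain ⟨x', hx'⟩ := cauchySeq_tendsto_of_complete hcauchy
  -- the shifted radii tend to zero
  have hs0 : Tendsto s atTop (nhds 0) := by
    rw [← tendsto_add_atTop_iff_nat 1, hshift]
    simpa using (tendsto_pow_atTop_nhds_zero_of_lt_one (by norm_num)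
      (by norm_num : (1 / 2 : ℝ) < 1)).const_mul ((a - r) / 4)
  -- u (seq n) tends to y
  have huy : Tendsto (fun n => u (seq n)) atTop (nhds y) := by
    rw [tendsto_iff_dist_tendsto_zero]
    apply squeeze_zero' (Eventually.of_forall fun n => dist_nonneg) _ hs0
    filter_upwards [eventually_ge_atTop 1] with n hn
    match n, hn with
    | (m + 1), _ => exact htail m
  have huxy : u x' = y :=
    tendsto_nhds_unique (((hu.tendsto x').comp hx')) huy
  -- distance bound
  have hsum : ∀ m, ∑ i ∈ Finset.range m, s i ≤ a := by
    have claim : ∀ k, ∑ i ∈ Finset.range (k + 1), s i ≤ a - (a - r) / 2 ^ (k + 1) := by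
      intro k
      induction k with
      | zero =>
        rw [Finset.sum_range_one]
        have hs0v : s 0 = r := if_pos rfl
        rw [hs0v, pow_one]
        linarith
      | succ k ih =>
        rw [Finset.sum_range_succ]
        have : s (k + 1) = (a - r) / 2 ^ (k + 2) := by
          simp [hs_def]
        rw [this]
        have h2 : (a - r) / 2 ^ (k + 2) ≤ (a - r) / 2 ^ (k + 1) - (a - r) / 2 ^ (k + 2) := by
          rw [pow_succ]
          rw [le_sub_iff_add_le]
          have : (a - r) / (2 ^ (k + 1) * 2) + (a - r) / (2 ^ (k + 1) * 2)
              = (a - r) / 2 ^ (k + 1) := by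
            field_simp
            ring
          rw [this]
        linarith
    intro m
    match m with
    | 0 => simp; linarith
    | (k + 1) =>
      have hpos : 0 < (a - r) / 2 ^ (k + 1) := by positivity
      linarith [claim k]
  have hdistm : ∀ m, dist x (seq m) ≤ a := by
    intro m
    have h0 : seq 0 = x := rfl
    calc dist x (seq m) = dist (seq 0) (seq m) := by rw [h0]
      _ ≤ ∑ i ∈ Finset.range m, dist (seq i) (seq (i + 1)) := dist_le_range_sum_dist seq m
      _ ≤ ∑ i ∈ Finset.range m, s i := Finset.sum_le_sum fun i _ => hstep i
      _ ≤ a := hsum m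
  have hdx : dist x' x ≤ a := by
    have hts : Tendsto (fun m => dist (seq m) x) atTop (nhds (dist x' x)) :=
      hx'.dist tendsto_const_nhds
    exact le_of_tendsto hts (Eventually.of_forall fun m => by
      rw [dist_comm]; exact hdistm m)
  exact ⟨x', Metric.mem_closedBall.mpr hdx, huxy⟩
end

section
/- Let R be a topological ring admitting a sequence of units converging to 0. Let M and N be Hausdorff topological R-modules, each having a countable fundamental system of open neighbourhoods of 0, with both M and N complete. Then every continuous R-linear bijection u : M → N is an isomorphism of topological R-modules, i.e. its inverse is also continuous. -/
open Filter Set Topology Uniformity Pointwise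

/-- Step 1 of the open mapping theorem: the closure of the image of any neighbourhood of `0`
is a neighbourhood of `0`, by a Baire category argument. -/
theorem aux_closure_image_mem_nhds
    {R : Type*} [Ring R] [TopologicalSpace R] [IsTopologicalRing R]
    (hR : ∃ r : ℕ → Rˣ, Filter.Tendsto (fun n => (r n : R)) Filter.atTop (nhds 0))
    {M N : Type*}
    [AddCommGroup M] [Module R M] [UniformSpace M] [IsUniformAddGroup M]
    [ContinuousSMul R M] [FirstCountableTopology M]
    [AddCommGroup N] [Module R N] [UniformSpace N] [IsUniformAddGroup N]
    [ContinuousSMul R N] [FirstCountableTopology N]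
    [CompleteSpace N]
    (u : M ≃ₗ[R] N) (s : Set M) (hs : s ∈ 𝓝 (0 : M)) :
    closure (u '' s) ∈ 𝓝 (0 : N) := by
  obtain ⟨r, hr⟩ := hR
  haveI : (𝓤 N).IsCountablyGenerated := IsUniformAddGroup.uniformity_countably_generated
  -- choose V with V - V ⊆ s
  obtain ⟨V, hV, hVs⟩ : ∃ V ∈ 𝓝 (0 : M), V - V ⊆ s := by
    have h : Tendsto (fun p : M × M => p.1 - p.2) (𝓝 (0, 0)) (𝓝 (0 : M)) := by
      simpa using (continuous_sub (G := M)).tendsto ((0 : M), (0 : M))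
    have h2 : (fun p : M × M => p.1 - p.2) ⁻¹' s ∈ 𝓝 ((0 : M), (0 : M)) := h hs
    rw [nhds_prod_eq, Filter.mem_prod_iff] at h2
    obtain ⟨A, hA, B, hB, hAB⟩ := h2
    refine ⟨A ∩ B, Filter.inter_mem hA hB, ?_⟩
    rintro x ⟨a, ha, b, hb, rfl⟩
    exact hAB (Set.mk_mem_prod ha.1 hb.2)
  set W := closure (u '' V) with hW
  have hWclosed : IsClosed W := isClosed_closure
  -- the sets (r n)⁻¹ • W cover N
  have hcover : (⋃ n, ((r n)⁻¹ : Rˣ) • W) = Set.univ := by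
    refine Set.eq_univ_of_forall fun y => ?_
    set m := u.symm y with hm
    have hy : u m = y := u.apply_symm_apply y
    have htend : Tendsto (fun n => (r n : R) • m) atTop (𝓝 (0 : M)) := by
      simpa using hr.smul_const m
    obtain ⟨n, hn⟩ := (htend.eventually_mem hV).exists
    refine Set.mem_iUnion.2 ⟨n, ?_⟩
    refine ⟨(r n : R) • y, subset_closure ⟨(r n : R) • m, hn, by rw [map_smul, hy]⟩, ?_⟩
    show ((r n)⁻¹ : Rˣ) • ((r n : R) • y) = y
    rw [← Units.smul_def (r n) y, inv_smul_smul]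
  obtain ⟨n, hn⟩ : ∃ n, (interior (((r n)⁻¹ : Rˣ) • W)).Nonempty := by
    apply nonempty_interior_of_iUnion_of_closed (fun n => hWclosed.smul _)
    exact hcover
  have hint : (interior W).Nonempty := by
    rw [interior_smul] at hn
    exact smul_set_nonempty.1 hn
  obtain ⟨y0, hy0⟩ := hint
  -- translate: (· + y0) ⁻¹' interior W is an open nbhd of 0 contained in W - W
  have hopen : IsOpen ((fun z : N => z + y0) ⁻¹' interior W) :=
    isOpen_interior.preimage (continuous_id.add continuous_const)
  have h0mem : (0 : N) ∈ (fun z : N => z + y0) ⁻¹' interior W := by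
    simpa using hy0
  have hsub : (fun z : N => z + y0) ⁻¹' interior W ⊆ closure (u '' s) := by
    intro z hz
    have hz1 : z + y0 ∈ W := interior_subset hz
    have hy0W : y0 ∈ W := interior_subset hy0
    -- z = (z + y0) - y0 ∈ W - W ⊆ closure (u '' (V - V)) ⊆ closure (u '' s)
    have hWW : W - W ⊆ closure (u '' s) := by
      have h1 : W - W ⊆ closure (u '' V - u '' V) := by
        rintro x ⟨a, ha, b, hb, rfl⟩
        have hc : Continuous fun p : N × N => p.1 - p.2 := continuous_sub
        have hab : (a, b) ∈ closure ((u '' V) ×ˢ (u '' V)) := by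
          rw [closure_prod_eq]; exact ⟨ha, hb⟩
        have hx : a - b ∈ closure ((fun p : N × N => p.1 - p.2) '' ((u '' V) ×ˢ (u '' V))) :=
          image_closure_subset_closure_image hc ⟨(a, b), hab, rfl⟩
        refine closure_mono ?_ hx
        rintro - ⟨⟨p, q⟩, ⟨hp, hq⟩, rfl⟩
        exact ⟨p, hp, q, hq, rfl⟩
      refine h1.trans (closure_mono ?_)
      rintro - ⟨-, ⟨a, ha, rfl⟩, -, ⟨b, hb, rfl⟩, rfl⟩
      exact ⟨a - b, hVs ⟨a, ha, b, hb, rfl⟩, by rw [map_sub]⟩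
    have : z = (z + y0) - y0 := by abel
    rw [this]
    exact hWW (Set.sub_mem_sub hz1 hy0W)
  exact Filter.mem_of_superset (hopen.mem_nhds h0mem) hsub

/-- Over a topological ring with a sequence of units converging to `0`, a continuous
linear bijection between complete, Hausdorff, first-countable topological modules is an
isomorphism of topological modules, i.e. its inverse is continuous. -/
theorem continuous_symm_of_continuous_bijective
    {R : Type*} [Ring R] [TopologicalSpace R] [IsTopologicalRing R]
    (hR : ∃ r : ℕ → Rˣ, Filter.Tendsto (fun n => (r n : R)) Filter.atTop (nhds 0))
    {M N : Type*}
    [AddCommGroup M] [Module R M] [UniformSpace M] [IsUniformAddGroup M]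
    [ContinuousSMul R M] [T2Space M] [FirstCountableTopology M]
    [CompleteSpace M]
    [AddCommGroup N] [Module R N] [UniformSpace N] [IsUniformAddGroup N]
    [ContinuousSMul R N] [T2Space N] [FirstCountableTopology N]
    [CompleteSpace N]
    (u : M ≃ₗ[R] N) (hu : Continuous u) :
    Continuous u.symm := by
  have key : ∀ s ∈ 𝓝 (0 : M), u '' s ∈ 𝓝 (0 : N) := by
    obtain ⟨U, hUb, hU2⟩ := IsTopologicalAddGroup.exists_antitone_basis_nhds_zero M
    intro s hs
    obtain ⟨t, htmem, htclosed, hts⟩ := exists_mem_nhds_isClosed_subset hs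
    obtain ⟨k0, -, hk0⟩ := hUb.1.mem_iff.1 htmem
    set V : ℕ → Set M := fun n => U (k0 + n) with hVdef
    have hVmem : ∀ n, V n ∈ 𝓝 (0 : M) := fun n => hUb.1.mem_of_mem trivial
    have hV2 : ∀ n, V (n + 1) + V (n + 1) ⊆ V n := fun n => hU2 (k0 + n)
    have h0V : ∀ n, (0 : M) ∈ V n := fun n => mem_of_mem_nhds (hVmem n)
    have hcl : ∀ W' ∈ 𝓝 (0 : M), closure (u '' W') ∈ 𝓝 (0 : N) := fun W' hW' =>
      aux_closure_image_mem_nhds hR u W' hW'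
    -- the one-step approximation
    have hrec : ∀ (n : ℕ) (z : N), z ∈ closure (u '' V (n + 1)) →
        ∃ x, x ∈ V (n + 1) ∧ z - u x ∈ closure (u '' V (n + 2)) := by
      intro n z hz
      have hC : closure (u '' V (n + 2)) ∈ 𝓝 (0 : N) := hcl _ (hVmem _)
      have hA : (fun w : N => z - w) ⁻¹' closure (u '' V (n + 2)) ∈ 𝓝 z := by
        have hcz : Continuous (fun w : N => z - w) := continuous_const.sub continuous_id
        have h : Tendsto (fun w : N => z - w) (𝓝 z) (𝓝 0) := by
          simpa using hcz.tendsto z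
        exact h hC
      obtain ⟨w, hwA, hwI⟩ := mem_closure_iff_nhds.1 hz _ hA
      obtain ⟨x, hx, rfl⟩ := hwI
      exact ⟨x, hx, hwA⟩
    choose! f hf1 hf2 using hrec
    have main : closure (u '' V 1) ⊆ u '' s := by
      intro y hy
      set z : ℕ → N := fun n => Nat.recOn n y fun k zk => zk - u (f k zk) with hzdef
      have hz0 : z 0 = y := rfl
      have hzsucc : ∀ n, z (n + 1) = z n - u (f n (z n)) := fun n => rfl
      have hzmem : ∀ n, z n ∈ closure (u '' V (n + 1)) := by
        intro n
        induction n with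
        | zero => exact hy
        | succ k ih => rw [hzsucc]; exact hf2 k (z k) ih
      set x : ℕ → M := fun n => f n (z n) with hxdef
      have hxmem : ∀ n, x n ∈ V (n + 1) := fun n => hf1 n (z n) (hzmem n)
      set S : ℕ → M := fun n => ∑ k ∈ Finset.range n, x k with hSdef
      have sum_mem : ∀ m n, (∑ k ∈ Finset.range m, x (n + k)) ∈ V n := by
        intro m
        induction m with
        | zero => intro n; simpa using h0V n
        | succ m ih =>
          intro n
          rw [Finset.sum_range_succ']
          have e : (∑ k ∈ Finset.range m, x (n + (k + 1))) =
              ∑ k ∈ Finset.range m, x ((n + 1) + k) :=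
            Finset.sum_congr rfl fun k _ => by ring_nf
          rw [e]
          have h2 : x (n + 0) ∈ V (n + 1) := by simpa using hxmem n
          exact hV2 n (Set.add_mem_add (ih (n + 1)) h2)
      have h𝓤M : (𝓤 M).HasBasis (fun _ : ℕ => True)
          (fun i => (fun p : M × M => p.1 - p.2) ⁻¹' U i) := by
        rw [uniformity_eq_comap_nhds_zero_swapped]
        exact hUb.1.comap _
      have hcau : CauchySeq S := by
        rw [h𝓤M.cauchySeq_iff']
        intro i _
        refine ⟨i, fun n hn => ?_⟩
        have hdiff : S n - S i = ∑ k ∈ Finset.range (n - i), x (i + k) := by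
          rw [← Finset.sum_Ico_eq_sum_range, Finset.sum_Ico_eq_sub _ hn]
        show S n - S i ∈ U i
        rw [hdiff]
        exact hUb.2 (Nat.le_add_left i k0) (sum_mem (n - i) i)
      obtain ⟨xlim, hxlim⟩ := cauchySeq_tendsto_of_complete hcau
      have hzS : ∀ n, z n = y - u (S n) := by
        intro n
        induction n with
        | zero => simp [hz0, hSdef]
        | succ k ih =>
          have hS : S (k + 1) = S k + x k := Finset.sum_range_succ x k
          calc z (k + 1) = z k - u (x k) := hzsucc k
            _ = (y - u (S k)) - u (x k) := by rw [ih]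
            _ = y - (u (S k) + u (x k)) := by abel
            _ = y - u (S (k + 1)) := by rw [hS, map_add]
      have hz0' : Tendsto z atTop (𝓝 (0 : N)) := by
        rw [(closed_nhds_basis (0 : N)).tendsto_right_iff]
        rintro W' ⟨hW'mem, hW'closed⟩
        have hpre : u ⁻¹' W' ∈ 𝓝 (0 : M) := by
          have h := hu.tendsto (0 : M)
          rw [map_zero] at h
          exact h hW'mem
        obtain ⟨j, -, hj⟩ := hUb.1.mem_iff.1 hpre
        filter_upwards [eventually_ge_atTop j] with n hn
        have hsubV : V (n + 1) ⊆ U j := hUb.2 (by omega)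
        have himg : u '' V (n + 1) ⊆ W' := by
          rintro - ⟨a, ha, rfl⟩
          exact hj (hsubV ha)
        exact hW'closed.closure_subset_iff.2 himg (hzmem n)
      have h1 : Tendsto (fun n => u (S n)) atTop (𝓝 (u xlim)) := (hu.tendsto xlim).comp hxlim
      have h2 : Tendsto (fun n => u (S n)) atTop (𝓝 y) := by
        have he : (fun n => u (S n)) = fun n => y - z n := by
          funext n; rw [hzS n]; abel
        rw [he]
        simpa using tendsto_const_nhds.sub hz0'
      have hux : u xlim = y := tendsto_nhds_unique h1 h2
      have hSt : ∀ n, S n ∈ t := by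
        intro n
        have := sum_mem n 0
        simp only [Nat.zero_add] at this
        exact hk0 (by simpa [hSdef, hVdef] using this)
      have hxlimt : xlim ∈ t := htclosed.mem_of_tendsto hxlim (Filter.Eventually.of_forall hSt)
      exact ⟨xlim, hts hxlimt, hux⟩
    exact Filter.mem_of_superset (hcl (V 1) (hVmem 1)) main
  have himg : ∀ s : Set M, u.symm ⁻¹' s = u '' s := by
    intro s; ext y; constructor
    · intro h; exact ⟨u.symm y, h, u.apply_symm_apply y⟩
    · rintro ⟨m, hm, rfl⟩; simpa using hm
  have hcont0 : ContinuousAt u.symm 0 := by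
    have h : Tendsto u.symm (𝓝 (0 : N)) (𝓝 (0 : M)) := by
      rw [Filter.tendsto_def]
      intro s hs
      rw [himg]
      exact key s hs
    simpa [ContinuousAt, map_zero] using h
  exact continuous_of_continuousAt_zero u.symm hcont0
end

section
/- Let R be a complete Hausdorff topological ring admitting a sequence of units converging to 0 and having a countable fundamental system of open neighbourhoods of 0. Let M and N be topological R-modules such that M is Hausdorff, complete, finitely generated as an R-module, and has a countable fundamental system of open neighbourhoods of 0. Then every R-linear map f : M → N is continuous. -/
open Filter Set Topology

theorem continuous_of_finite.auxA
    {R : Type*} [Ring R] [TopologicalSpace R] [IsTopologicalRing R]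
    (hR : ∃ r : ℕ → Rˣ, Filter.Tendsto (fun n => (r n : R)) Filter.atTop (nhds 0))
    {P M : Type*}
    [AddCommGroup P] [Module R P] [TopologicalSpace P] [IsTopologicalAddGroup P]
    [ContinuousSMul R P]
    [AddCommGroup M] [Module R M] [UniformSpace M] [IsUniformAddGroup M]
    [ContinuousSMul R M] [FirstCountableTopology M] [CompleteSpace M]
    (φ : P →ₗ[R] M) (hsurj : Function.Surjective φ)
    {U : Set P} (hU : U ∈ 𝓝 (0 : P)) :
    closure (φ '' U) ∈ 𝓝 (0 : M) := by
  obtain ⟨r, hr⟩ := hR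
  -- Baire
  have hcg : (uniformity M).IsCountablyGenerated := by
    rw [uniformity_eq_comap_nhds_zero M]; infer_instance
  have hBaire : BaireSpace M := by
    letI := UniformSpace.pseudoMetricSpace M
    infer_instance
  -- small symmetric-ish nbhd
  obtain ⟨V₀, hV₀, hV₀add⟩ := exists_nhds_zero_half hU
  set V : Set P := V₀ ∩ (-V₀) with hVdef
  have hV : V ∈ 𝓝 (0 : P) := by
    apply Filter.inter_mem hV₀
    exact neg_mem_nhds_zero P hV₀
  have hVsub : ∀ a ∈ V, ∀ b ∈ V, a - b ∈ U := by
    intro a ha b hb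
    have : a + -b ∈ U := hV₀add a ha.1 (-b) (by simpa using hb.2)
    simpa [sub_eq_add_neg] using this
  -- countable closed cover
  set A : Set M := closure (φ '' V) with hAdef
  set C : ℕ → Set M := fun n => (fun x : M => (r n : R) • x) ⁻¹' A with hCdef
  have hCclosed : ∀ n, IsClosed (C n) := fun n =>
    isClosed_closure.preimage (continuous_const_smul _)
  have hCcover : ⋃ n, C n = univ := by
    apply eq_univ_iff_forall.2
    intro x
    obtain ⟨c, rfl⟩ := hsurj x
    have h1 : Tendsto (fun n => (r n : R) • c) atTop (𝓝 0) := by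
      simpa using hr.smul_const c
    have h2 : ∀ᶠ n in atTop, (r n : R) • c ∈ V := h1.eventually_mem hV
    obtain ⟨n, hn⟩ := h2.exists
    refine mem_iUnion.2 ⟨n, ?_⟩
    show (r n : R) • φ c ∈ A
    rw [← map_smul]
    exact subset_closure ⟨_, hn, rfl⟩
  have : Nonempty M := ⟨0⟩
  obtain ⟨n, hn⟩ := nonempty_interior_of_iUnion_of_closed hCclosed hCcover
  -- transfer interior via homeomorphism
  have hAint : (interior A).Nonempty := by
    let e : M ≃ₜ M := Homeomorph.smul (r n)
    have : C n = e ⁻¹' A := rfl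
    rw [this, ← e.preimage_interior] at hn
    exact hn.image e |>.mono (by rw [Set.image_preimage_eq _ e.surjective])
  obtain ⟨y, hy⟩ := hAint
  -- 0 ∈ open set (interior A) - y ⊆ closure (φ '' U)
  have hopen : IsOpen ((fun z : M => z - y) '' interior A) :=
    (isOpenMap_sub_right y) _ isOpen_interior
  have h0 : (0 : M) ∈ (fun z : M => z - y) '' interior A := ⟨y, hy, sub_self y⟩
  have hsub : (fun z : M => z - y) '' interior A ⊆ closure (φ '' U) := by
    rintro _ ⟨z, hz, rfl⟩
    have hzA : z ∈ A := interior_subset hz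
    have hyA : y ∈ A := interior_subset hy
    -- z - y ∈ closure (φ '' V) - closure (φ '' V) ⊆ closure (φ '' U)
    have key : (fun p : M × M => p.1 - p.2) '' (closure (φ '' V) ×ˢ closure (φ '' V))
        ⊆ closure ((fun p : M × M => p.1 - p.2) '' ((φ '' V) ×ˢ (φ '' V))) := by
      rw [← closure_prod_eq]
      exact image_closure_subset_closure_image continuous_sub
    have hz' : z - y ∈ closure ((fun p : M × M => p.1 - p.2) '' ((φ '' V) ×ˢ (φ '' V))) :=
      key ⟨(z, y), ⟨hzA, hyA⟩, rfl⟩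
    refine closure_mono ?_ hz'
    rintro _ ⟨⟨_, _⟩, ⟨⟨a, ha, rfl⟩, ⟨b, hb, rfl⟩⟩, rfl⟩
    exact ⟨a - b, hVsub a ha b hb, by simp [map_sub]⟩
  exact Filter.mem_of_superset (hopen.mem_nhds h0) hsub

theorem continuous_of_finite.auxB
    {R : Type*} [Ring R] [TopologicalSpace R] [IsTopologicalRing R]
    (hR : ∃ r : ℕ → Rˣ, Filter.Tendsto (fun n => (r n : R)) Filter.atTop (nhds 0))
    {P M : Type*}
    [AddCommGroup P] [Module R P] [UniformSpace P] [IsUniformAddGroup P]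
    [ContinuousSMul R P] [FirstCountableTopology P] [CompleteSpace P]
    [AddCommGroup M] [Module R M] [UniformSpace M] [IsUniformAddGroup M]
    [ContinuousSMul R M] [T2Space M] [FirstCountableTopology M] [CompleteSpace M]
    (φ : P →ₗ[R] M) (hφ : Continuous φ) (hsurj : Function.Surjective φ)
    {U : Set P} (hU : U ∈ 𝓝 (0 : P)) :
    φ '' U ∈ 𝓝 (0 : M) := by
  have auxA : ∀ {S : Set P}, S ∈ 𝓝 (0 : P) → closure (φ '' S) ∈ 𝓝 (0 : M) := by
    intro S hS
    exact continuous_of_finite.auxA hR φ hsurj hS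
  -- antitone bases
  obtain ⟨V, hV⟩ := (𝓝 (0 : P)).exists_antitone_basis
  obtain ⟨Z, hZ⟩ := (𝓝 (0 : M)).exists_antitone_basis
  -- a closed neighbourhood inside U
  obtain ⟨W, ⟨hWnhds, hWclosed⟩, hWU⟩ := (closed_nhds_basis (0 : P)).mem_iff.1 hU
  -- recursive shrinking sequence
  have key : ∀ S : Set P, S ∈ 𝓝 (0 : P) → ∀ i : ℕ,
      ∃ T : Set P, T ∈ 𝓝 (0:P) ∧ T ⊆ V i ∧ ∀ a ∈ T, ∀ b ∈ T, a + b ∈ S := by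
    intro S hS i
    obtain ⟨T₀, hT₀, hT₀add⟩ := exists_nhds_zero_half hS
    refine ⟨T₀ ∩ V i, Filter.inter_mem hT₀ (hV.mem i), inter_subset_right, ?_⟩
    intro a ha b hb
    exact hT₀add a ha.1 b hb.1
  choose T hT1 hT2 hT3 using key
  -- u : ℕ → {S : Set P // S ∈ 𝓝 0}
  let u : ℕ → {S : Set P // S ∈ 𝓝 (0:P)} := fun n =>
    Nat.rec ⟨T W hWnhds 0, hT1 W hWnhds 0⟩
      (fun i prev => ⟨T prev.1 prev.2 (i+1), hT1 prev.1 prev.2 (i+1)⟩) n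
  have hu_mem : ∀ n, (u n).1 ∈ 𝓝 (0:P) := fun n => (u n).2
  have hu_sub : ∀ n, (u n).1 ⊆ V n := by
    intro n; cases n with
    | zero => exact hT2 W hWnhds 0
    | succ i => exact hT2 _ _ (i+1)
  have hu_add0 : ∀ a ∈ (u 0).1, ∀ b ∈ (u 0).1, a + b ∈ W := hT3 W hWnhds 0
  have hu_add : ∀ i, ∀ a ∈ (u (i+1)).1, ∀ b ∈ (u (i+1)).1, a + b ∈ (u i).1 := by
    intro i; exact hT3 (u i).1 (u i).2 (i+1)
  have hu_zero : ∀ n, (0:P) ∈ (u n).1 := fun n => mem_of_mem_nhds (hu_mem n)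
  have hu_anti : ∀ i, (u (i+1)).1 ⊆ (u i).1 := by
    intro i a ha
    simpa using hu_add i a ha 0 (hu_zero (i+1))
  have hu_mono : ∀ {i j}, i ≤ j → (u j).1 ⊆ (u i).1 := by
    intro i j hij
    induction hij with
    | refl => exact subset_rfl
    | step h ih => exact (hu_anti _).trans ih
  -- closures are neighbourhoods
  have hCl : ∀ n, closure (φ '' (u n).1) ∈ 𝓝 (0 : M) := fun n => auxA (hu_mem n)
  -- show closure (φ '' u 0) ⊆ φ '' U ; this suffices
  refine Filter.mem_of_superset (hCl 0) ?_
  intro y₀ hy₀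
  -- recursive construction of approximating points
  have step : ∀ i : ℕ, ∀ y : M, y ∈ closure (φ '' (u i).1) →
      ∃ x : P, x ∈ (u i).1 ∧
        y - φ x ∈ closure (φ '' (u (i+1)).1) ∩ Z (i+1) := by
    intro i y hy
    have hnb : closure (φ '' (u (i+1)).1) ∩ Z (i+1) ∈ 𝓝 (0:M) :=
      Filter.inter_mem (hCl (i+1)) (hZ.mem (i+1))
    have hmap : Tendsto (fun z : M => y - z) (𝓝 y) (𝓝 0) := by
      have := (tendsto_const_nhds (x := y) (f := 𝓝 y)).sub tendsto_id
      simpa using this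
    obtain ⟨w, hw1, hw2⟩ := (mem_closure_iff_nhds.1 hy) _ (hmap.eventually_mem hnb)
    obtain ⟨x, hx, rfl⟩ := hw2
    exact ⟨x, hx, hw1⟩
  choose X hX1 hX2 using step
  -- sequence of approximants
  let ys : ∀ n : ℕ, {y : M // y ∈ closure (φ '' (u n).1)} := fun n =>
    Nat.rec ⟨y₀, hy₀⟩
      (fun i prev => ⟨prev.1 - φ (X i prev.1 prev.2), (hX2 i prev.1 prev.2).1⟩) n
  let x : ℕ → P := fun n => X n (ys n).1 (ys n).2
  have hx_mem : ∀ n, x n ∈ (u n).1 := fun n => hX1 n (ys n).1 (ys n).2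
  have hys_succ : ∀ n, (ys (n+1)).1 = (ys n).1 - φ (x n) := fun n => rfl
  have hys_Z : ∀ n, (ys (n+1)).1 ∈ Z (n+1) := fun n => (hX2 n (ys n).1 (ys n).2).2
  -- partial sums
  let s : ℕ → P := fun n => ∑ i ∈ Finset.range n, x i
  have hsum_Ico : ∀ d m : ℕ, ∃ c ∈ (u m).1, ∑ i ∈ Finset.Ico m (m + d + 1), x i = x m + c := by
    intro d
    induction d with
    | zero =>
      intro m
      refine ⟨0, hu_zero m, ?_⟩
      simp
    | succ d ih =>
      intro m
      obtain ⟨c, hc, hcs⟩ := ih (m+1)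
      have hm : m < m + (d+1) + 1 := by omega
      rw [Finset.sum_eq_sum_Ico_succ_bot hm]
      have : m + (d+1) + 1 = (m+1) + d + 1 := by omega
      rw [this, hcs]
      exact ⟨x (m+1) + c, hu_add m _ (hx_mem (m+1)) c hc, by abel⟩
  have hsum_mem : ∀ m n : ℕ, m < n → ∃ a ∈ (u m).1, ∃ b ∈ (u m).1,
      ∑ i ∈ Finset.Ico m n, x i = a + b := by
    intro m n hmn
    obtain ⟨d, rfl⟩ : ∃ d, n = m + d + 1 := ⟨n - m - 1, by omega⟩
    obtain ⟨c, hc, hcs⟩ := hsum_Ico d m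
    exact ⟨x m, hx_mem m, c, hc, hcs⟩
  -- Cauchy
  have hs_cauchy : CauchySeq s := by
    apply cauchySeq_of_controlled
      (fun N : ℕ => {p : P × P | p.2 - p.1 ∈
        (fun q : P × P => q.1 + q.2) '' ((u N).1 ×ˢ (u N).1) ∪
        (-((fun q : P × P => q.1 + q.2) '' ((u N).1 ×ˢ (u N).1))) ∪ {0}})
    · intro S hS
      rw [uniformity_eq_comap_nhds_zero P] at hS
      obtain ⟨t, ht, htS⟩ := hS
      obtain ⟨t₀, ht₀, ht₀add⟩ := exists_nhds_zero_half ht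
      have ht₀' : t₀ ∩ (-t₀) ∈ 𝓝 (0:P) :=
        Filter.inter_mem ht₀ (neg_mem_nhds_zero P ht₀)
      obtain ⟨n, hn⟩ := hV.mem_iff.1 ht₀'
      refine ⟨n, fun p hp => htS ?_⟩
      have h0t : (0:P) ∈ t := mem_of_mem_nhds ht
      have himg : ∀ z ∈ (fun q : P × P => q.1 + q.2) '' ((u n).1 ×ˢ (u n).1), z ∈ t := by
        rintro _ ⟨⟨a, b⟩, ⟨ha, hb⟩, rfl⟩
        exact ht₀add a (hn ((hu_sub n) ha)).1 b (hn ((hu_sub n) hb)).1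
      have himg' : ∀ z ∈ (fun q : P × P => q.1 + q.2) '' ((u n).1 ×ˢ (u n).1), -z ∈ t := by
        rintro _ ⟨⟨a, b⟩, ⟨ha, hb⟩, rfl⟩
        have : -(a + b) = (-a) + (-b) := by abel
        rw [this]
        exact ht₀add _ (by simpa using (hn ((hu_sub n) ha)).2) _
          (by simpa using (hn ((hu_sub n) hb)).2)
      show p.2 - p.1 ∈ t
      rcases hp with (h | h) | h
      · exact himg _ h
      · rw [Set.mem_neg] at h
        simpa using himg' _ h
      · simp only [Set.mem_singleton_iff] at h
        rw [h]; exact h0t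
    · intro N m n hNm hNn
      rcases lt_trichotomy m n with h | h | h
      · have hd : s n - s m = ∑ i ∈ Finset.Ico m n, x i := by
          simp [s, Finset.sum_Ico_eq_sub _ h.le]
        obtain ⟨a, ha, b, hb, hab⟩ := hsum_mem m n h
        exact Or.inl <| Or.inl <| by
          rw [hd, hab]
          exact ⟨(a, b), ⟨hu_mono hNm ha, hu_mono hNm hb⟩, rfl⟩
      · exact Or.inr (by simp [h])
      · have hd : s m - s n = ∑ i ∈ Finset.Ico n m, x i := by
          simp [s, Finset.sum_Ico_eq_sub _ h.le]
        obtain ⟨a, ha, b, hb, hab⟩ := hsum_mem n m h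
        refine Or.inl <| Or.inr ?_
        rw [Set.mem_neg]
        show -(s n - s m) ∈ _
        rw [neg_sub, hd, hab]
        exact ⟨(a, b), ⟨hu_mono hNn ha, hu_mono hNn hb⟩, rfl⟩
  obtain ⟨ξ, hξ⟩ := cauchySeq_tendsto_of_complete hs_cauchy
  -- ξ ∈ W ⊆ U
  have hsW : ∀ n, 1 ≤ n → s n ∈ W := by
    intro n hn
    have : s n = ∑ i ∈ Finset.Ico 0 n, x i := by
      simp only [s, Finset.range_eq_Ico]
    obtain ⟨a, ha, b, hb, hab⟩ := hsum_mem 0 n hn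
    rw [this, hab]
    exact hu_add0 a ha b hb
  have hξW : ξ ∈ W := hWclosed.mem_of_tendsto hξ
    (Filter.eventually_atTop.2 ⟨1, hsW⟩)
  -- y₀ = φ ξ
  have hys_eq : ∀ n, (ys n).1 = y₀ - φ (s n) := by
    intro n
    induction n with
    | zero =>
      show y₀ = y₀ - φ (∑ i ∈ Finset.range 0, x i)
      simp
    | succ n ih =>
      rw [hys_succ, ih]
      have : s (n+1) = s n + x n := Finset.sum_range_succ _ _
      rw [this, map_add]
      abel
  have htend0 : Tendsto (fun n => (ys n).1) atTop (𝓝 0) := by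
    have h1 : Tendsto (fun n => (ys (n+1)).1) atTop (𝓝 0) :=
      hZ.tendsto (fun n => hZ.antitone (Nat.le_succ n) (hys_Z n))
    exact (tendsto_add_atTop_iff_nat 1).1 h1
  have hφs : Tendsto (fun n => φ (s n)) atTop (𝓝 y₀) := by
    have := htend0
    simp only [hys_eq] at this
    have h2 : Tendsto (fun n => y₀ - (y₀ - φ (s n))) atTop (𝓝 (y₀ - 0)) :=
      tendsto_const_nhds.sub this
    simpa using h2
  have hφξ : Tendsto (fun n => φ (s n)) atTop (𝓝 (φ ξ)) := (hφ.tendsto ξ).comp hξ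
  have : y₀ = φ ξ := tendsto_nhds_unique hφs hφξ
  exact ⟨ξ, hWU hξW, this.symm⟩

/-- Over a complete Hausdorff first-countable topological ring with a sequence of units
converging to `0`, every linear map from a complete Hausdorff first-countable finitely
generated topological module to any topological module is continuous. -/
theorem continuous_of_finite
    {R : Type*} [Ring R] [UniformSpace R] [IsTopologicalRing R] [IsUniformAddGroup R]
    [CompleteSpace R] [T2Space R] [FirstCountableTopology R]
    (hR : ∃ r : ℕ → Rˣ, Filter.Tendsto (fun n => (r n : R)) Filter.atTop (nhds 0))
    {M N : Type*}
    [AddCommGroup M] [Module R M] [UniformSpace M] [IsUniformAddGroup M]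
    [ContinuousSMul R M] [T2Space M] [FirstCountableTopology M]
    [CompleteSpace M] [Module.Finite R M]
    [AddCommGroup N] [Module R N] [TopologicalSpace N] [IsTopologicalAddGroup N]
    [ContinuousSMul R N]
    (f : M →ₗ[R] N) :
    Continuous f := by
  classical
  obtain ⟨k, g, hg⟩ := Module.Finite.exists_fin (R := R) (M := M)
  -- the canonical surjection from R^k
  let φ : (Fin k → R) →ₗ[R] M :=
    { toFun := fun c => ∑ i, c i • g i
      map_add' := by
        intro a b
        simp [add_smul, Finset.sum_add_distrib]
      map_smul' := by
        intro r c
        simp [mul_smul, Finset.smul_sum] }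
  have hφcont : Continuous φ := by
    show Continuous fun c : Fin k → R => ∑ i, c i • g i
    apply continuous_finset_sum
    intro i _
    exact (continuous_apply i).smul continuous_const
  have hsurj : Function.Surjective φ := by
    intro x
    have hx : x ∈ Submodule.span R (Set.range g) := hg ▸ Submodule.mem_top
    obtain ⟨c, hc⟩ := (Submodule.mem_span_range_iff_exists_fun R).1 hx
    exact ⟨c, hc⟩
  -- the composite map R^k → N is continuous
  have hψcont : Continuous fun c : Fin k → R => f (φ c) := by
    have : ∀ c : Fin k → R, f (φ c) = ∑ i, c i • f (g i) := by
      intro c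
      show f (∑ i, c i • g i) = _
      rw [map_sum]
      simp
    simp only [this]
    apply continuous_finset_sum
    intro i _
    exact (continuous_apply i).smul continuous_const
  -- continuity at 0 suffices
  apply continuous_of_continuousAt_zero f
  rw [ContinuousAt, map_zero]
  intro V hV
  rw [Filter.mem_map]
  have hU : (fun c : Fin k → R => f (φ c)) ⁻¹' V ∈ 𝓝 (0 : Fin k → R) := by
    have h0 : (fun c : Fin k → R => f (φ c)) 0 = 0 := by simp
    have h1 := hψcont.continuousAt (x := (0 : Fin k → R))
    rw [ContinuousAt] at h1
    have h2 : f (φ 0) = 0 := by simp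
    rw [h2] at h1
    exact h1 hV
  have himg := continuous_of_finite.auxB hR φ hφcont hsurj hU
  refine Filter.mem_of_superset himg ?_
  rintro _ ⟨c, hc, rfl⟩
  exact hc
end

section
/- Let R be a commutative complete Hausdorff non-archimedean topological ring with a countable fundamental system of open neighbourhoods of 0, and let R°° denote its set of topologically nilpotent elements. Let M be an R-module and N ⊆ M a submodule such that there exist m_1, …, m_l ∈ M with M = N + ∑_{i=1}^{l} R°°·m_i. Then N = M. -/
set_option maxHeartbeats 1000000

open Filter Topology

section Aux

variable {R : Type*} [CommRing R]

private lemma bdd_pows' [TopologicalSpace R] [IsTopologicalRing R]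
    (a : R) (ha : Tendsto (fun n : ℕ => a ^ n) atTop (𝓝 0))
    (U : Set R) (hU : U ∈ 𝓝 (0 : R)) :
    ∃ V ∈ 𝓝 (0 : R), ∀ (n : ℕ), ∀ v ∈ V, a ^ n * v ∈ U := by
  have hmul : Tendsto (fun p : R × R => p.1 * p.2) (𝓝 0 ×ˢ 𝓝 0) (𝓝 (0 : R)) := by
    have h0 := (continuous_mul (M := R)).tendsto ((0 : R), (0 : R))
    rw [nhds_prod_eq] at h0
    simpa using h0
  rcases Filter.mem_prod_iff.mp (hmul hU) with ⟨W, hW, V1, hV1, hWV⟩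
  rcases (tendsto_atTop'.mp ha) W hW with ⟨K, hK⟩
  have hfin : (⋂ n ∈ Finset.range K, {v : R | a ^ n * v ∈ U}) ∈ 𝓝 (0 : R) := by
    refine (Filter.biInter_finset_mem _).mpr ?_
    intro n _
    have hc : Continuous fun v : R => a ^ n * v := continuous_const.mul continuous_id
    have he : {v : R | a ^ n * v ∈ U} = (fun v : R => a ^ n * v) ⁻¹' U := rfl
    rw [he]
    apply hc.continuousAt.preimage_mem_nhds
    simpa using hU
  refine ⟨V1 ∩ ⋂ n ∈ Finset.range K, {v : R | a ^ n * v ∈ U}, inter_mem hV1 hfin, ?_⟩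
  intro n v hv
  rcases lt_or_ge n K with hn | hn
  · exact Set.mem_iInter₂.mp hv.2 n (Finset.mem_range.mpr hn)
  · exact hWV (Set.mk_mem_prod (hK n hn) hv.1)

private lemma bdd_monomials' [TopologicalSpace R] [IsTopologicalRing R]
    {ι : Type*} [Fintype ι] [DecidableEq ι] (a : ι → R)
    (ha : ∀ i, Tendsto (fun n : ℕ => a i ^ n) atTop (𝓝 0))
    (U : Set R) (hU : U ∈ 𝓝 (0 : R)) :
    ∃ V ∈ 𝓝 (0 : R), ∀ (e : ι → ℕ), ∀ v ∈ V, (∏ i, a i ^ e i) * v ∈ U := by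
  suffices h : ∀ s : Finset ι, ∃ V ∈ 𝓝 (0 : R), ∀ (e : ι → ℕ), ∀ v ∈ V,
      (∏ i ∈ s, a i ^ e i) * v ∈ U from h Finset.univ
  intro s
  induction s using Finset.induction_on with
  | empty => exact ⟨U, hU, by simpa using fun e v hv => hv⟩
  | insert i s hi ih =>
    rcases ih with ⟨V, hV, hVp⟩
    rcases bdd_pows' (a i) (ha i) V hV with ⟨V', hV', hV'p⟩
    refine ⟨V', hV', ?_⟩
    intro e v hv
    rw [Finset.prod_insert hi, mul_comm (a i ^ e i), mul_assoc]
    exact hVp e _ (hV'p (e i) v hv)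

private lemma monomials_small' [TopologicalSpace R] [IsTopologicalRing R]
    {ι : Type*} [Fintype ι] [DecidableEq ι] (a : ι → R)
    (ha : ∀ i, Tendsto (fun n : ℕ => a i ^ n) atTop (𝓝 0))
    (U : Set R) (hU : U ∈ 𝓝 (0 : R)) :
    ∃ K : ℕ, ∀ e : ι → ℕ, K ≤ ∑ i, e i → ∏ i, a i ^ e i ∈ U := by
  rcases bdd_monomials' a ha U hU with ⟨V, hV, hVp⟩
  have hev : ∀ᶠ n : ℕ in atTop, ∀ i, a i ^ n ∈ V := by
    rw [eventually_all]
    exact fun i => (ha i).eventually_mem hV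
  rcases eventually_atTop.mp hev with ⟨K₀, hK₀⟩
  refine ⟨Fintype.card ι * K₀ + 1, ?_⟩
  intro e he
  have hne : (Finset.univ : Finset ι).Nonempty := by
    by_contra hc
    rw [Finset.not_nonempty_iff_eq_empty] at hc
    rw [hc] at he
    simp at he
  have hex : ∃ i, K₀ ≤ e i := by
    by_contra hc
    push_neg at hc
    have : ∑ i, e i < ∑ _i : ι, K₀ :=
      Finset.sum_lt_sum_of_nonempty hne fun i _ => hc i
    rw [Finset.sum_const, smul_eq_mul, Finset.card_univ] at this
    omega
  rcases hex with ⟨i, hi⟩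
  have hsplit : ∏ j, a j ^ e j = (∏ j, a j ^ (Function.update e i 0) j) * a i ^ e i := by
    have h1 : (fun j => a j ^ (Function.update e i 0) j)
        = Function.update (fun j => a j ^ e j) i 1 := by
      funext j
      by_cases hj : j = i
      · subst hj; simp
      · simp [Function.update_of_ne hj]
    rw [h1, Finset.prod_update_of_mem (Finset.mem_univ i)]
    rw [← Finset.mul_prod_erase Finset.univ (fun j => a j ^ e j) (Finset.mem_univ i)]
    rw [Finset.sdiff_singleton_eq_erase]
    ring
  rw [hsplit]
  exact hVp _ _ (hK₀ (e i) hi i)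

variable {l : ℕ}

/-- The set of monomials of total degree `k` in the entries of `D`. -/
private def monSet' (D : Matrix (Fin l) (Fin l) R) (k : ℕ) : Set R :=
  {x : R | ∃ e : Fin l × Fin l → ℕ, (∑ p, e p) = k ∧ x = ∏ p, D p.1 p.2 ^ e p}

private lemma mul_entry_mem_closure' (D : Matrix (Fin l) (Fin l) R) (k : ℕ) (p j : Fin l)
    {x : R} (hx : x ∈ AddSubgroup.closure (monSet' D k)) :
    x * D p j ∈ AddSubgroup.closure (monSet' D (k + 1)) := by
  induction hx using AddSubgroup.closure_induction with
  | mem y hy =>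
    rcases hy with ⟨e, hsum, rfl⟩
    apply AddSubgroup.subset_closure
    refine ⟨Function.update e (p, j) (e (p, j) + 1), ?_, ?_⟩
    · rw [Finset.sum_update_of_mem (Finset.mem_univ (p, j))]
      rw [← Finset.add_sum_erase Finset.univ e (Finset.mem_univ (p, j))] at hsum
      rw [Finset.sdiff_singleton_eq_erase]
      omega
    · have h1 : (fun q : Fin l × Fin l => D q.1 q.2 ^ (Function.update e (p, j) (e (p, j) + 1)) q)
          = Function.update (fun q : Fin l × Fin l => D q.1 q.2 ^ e q) (p, j)
              (D p j ^ (e (p, j) + 1)) := by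
        funext q
        by_cases hq : q = (p, j)
        · subst hq; simp
        · simp [Function.update_of_ne hq]
      rw [h1, Finset.prod_update_of_mem (Finset.mem_univ (p, j))]
      rw [← Finset.mul_prod_erase Finset.univ
        (fun q : Fin l × Fin l => D q.1 q.2 ^ e q) (Finset.mem_univ (p, j))]
      rw [Finset.sdiff_singleton_eq_erase]
      ring
  | zero => simpa using AddSubgroup.zero_mem _
  | add y z _ _ hy hz => simpa [add_mul] using AddSubgroup.add_mem _ hy hz
  | neg y _ hy => simpa [neg_mul] using AddSubgroup.neg_mem _ hy

private lemma pow_entry_mem_closure' (D : Matrix (Fin l) (Fin l) R) :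
    ∀ (k : ℕ) (i j : Fin l), (D ^ k) i j ∈ AddSubgroup.closure (monSet' D k) := by
  intro k
  induction k with
  | zero =>
    intro i j
    rw [pow_zero]
    rcases eq_or_ne i j with rfl | hij
    · rw [Matrix.one_apply_eq]
      apply AddSubgroup.subset_closure
      exact ⟨0, by simp, by simp⟩
    · rw [Matrix.one_apply_ne hij]
      exact AddSubgroup.zero_mem _
  | succ k ih =>
    intro i j
    rw [pow_succ, Matrix.mul_apply]
    exact AddSubgroup.sum_mem _ fun p _ => mul_entry_mem_closure' D k p j (ih i p)

private lemma pow_entries_small' [TopologicalSpace R] [IsTopologicalRing R]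
    [NonarchimedeanRing R] (D : Matrix (Fin l) (Fin l) R)
    (hD : ∀ i j, Tendsto (fun n : ℕ => D i j ^ n) atTop (𝓝 0))
    (U : Set R) (hU : U ∈ 𝓝 (0 : R)) :
    ∃ K : ℕ, ∀ k ≥ K, ∀ i j, (D ^ k) i j ∈ U := by
  rcases NonarchimedeanRing.is_nonarchimedean U hU with ⟨W, hW⟩
  rcases monomials_small' (fun p : Fin l × Fin l => D p.1 p.2)
      (fun p => hD p.1 p.2) (W : Set R) W.mem_nhds_zero with ⟨K, hK⟩
  refine ⟨K, fun k hk i j => ?_⟩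
  apply hW
  have hmon : monSet' D k ⊆ (W : Set R) := by
    rintro x ⟨e, hsum, rfl⟩
    exact hK e (hsum ▸ hk)
  have hle := (AddSubgroup.closure_le W.toAddSubgroup).mpr hmon
  exact hle (pow_entry_mem_closure' D k i j)

private lemma pow_entry_tendsto' [TopologicalSpace R] [IsTopologicalRing R]
    [NonarchimedeanRing R] (D : Matrix (Fin l) (Fin l) R)
    (hD : ∀ i j, Tendsto (fun n : ℕ => D i j ^ n) atTop (𝓝 0)) (i j : Fin l) :
    Tendsto (fun k : ℕ => (D ^ k) i j) atTop (𝓝 0) := by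
  rw [tendsto_def]
  intro U hU
  rcases pow_entries_small' D hD U hU with ⟨K, hK⟩
  exact eventually_atTop.mpr ⟨K, fun k hk => hK k hk i j⟩

private lemma neumann' [UniformSpace R] [NonarchimedeanRing R] [IsUniformAddGroup R]
    [CompleteSpace R] [T2Space R] (D : Matrix (Fin l) (Fin l) R)
    (hD : ∀ i j, Tendsto (fun n : ℕ => D i j ^ n) atTop (𝓝 0)) :
    ∃ L : Matrix (Fin l) (Fin l) R, L * (1 - D) = 1 ∧ (1 - D) * L = 1 := by
  have hsum : ∀ i j, Summable (fun k : ℕ => (D ^ k) i j) := by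
    intro i j
    apply NonarchimedeanAddGroup.summable_of_tendsto_cofinite_zero
    rw [Nat.cofinite_eq_atTop]
    exact pow_entry_tendsto' D hD i j
  set L : Matrix (Fin l) (Fin l) R := Matrix.of fun i j => ∑' k : ℕ, (D ^ k) i j with hL
  have htel : ∀ i j : Fin l,
      HasSum (fun k : ℕ => (D ^ k - D ^ (k + 1)) i j) ((1 : Matrix (Fin l) (Fin l) R) i j) := by
    intro i j
    have hs : Summable (fun k : ℕ => (D ^ k - D ^ (k + 1)) i j) := by
      have h2 : Summable (fun k : ℕ => (D ^ (k + 1)) i j) :=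
        (summable_nat_add_iff (f := fun k : ℕ => (D ^ k) i j) 1).mpr (hsum i j)
      exact ((hsum i j).sub h2).congr fun k => (Matrix.sub_apply _ _ _ _).symm
    have h1 := hs.hasSum
    have h2 := h1.tendsto_sum_nat
    have h3 : ∀ n : ℕ, ∑ k ∈ Finset.range n, (D ^ k - D ^ (k + 1)) i j
        = (D ^ 0) i j - (D ^ n) i j := by
      intro n
      simpa [Matrix.sub_apply] using
        Finset.sum_range_sub' (fun k : ℕ => (D ^ k) i j) n
    have h4 : Tendsto (fun n : ℕ => ∑ k ∈ Finset.range n, (D ^ k - D ^ (k + 1)) i j) atTop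
        (𝓝 ((D ^ 0) i j - 0)) := by
      simp only [h3]
      exact tendsto_const_nhds.sub (pow_entry_tendsto' D hD i j)
    have h5 : ∑' k : ℕ, (D ^ k - D ^ (k + 1)) i j = (1 : Matrix (Fin l) (Fin l) R) i j := by
      have := tendsto_nhds_unique h2 h4
      simpa [pow_zero] using this
    rwa [h5] at h1
  refine ⟨L, ?_, ?_⟩
  · ext i j
    rw [Matrix.mul_apply, Matrix.one_apply]
    have hH : HasSum (fun k : ℕ => ∑ p, (D ^ k) i p * (1 - D) p j)
        (∑ p, L i p * (1 - D) p j) :=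
      hasSum_sum fun p _ => ((hsum i p).hasSum.mul_right _)
    have he : (fun k : ℕ => ∑ p, (D ^ k) i p * (1 - D) p j)
        = fun k : ℕ => (D ^ k - D ^ (k + 1)) i j := by
      funext k
      rw [← Matrix.mul_apply]
      rw [show D ^ k * (1 - D) = D ^ k - D ^ (k + 1) by rw [mul_sub, mul_one, ← pow_succ]]
    rw [he] at hH
    have hq := hH.unique (htel i j)
    rw [Matrix.one_apply] at hq
    exact hq
  · ext i j
    rw [Matrix.mul_apply, Matrix.one_apply]
    have hH : HasSum (fun k : ℕ => ∑ p, (1 - D) i p * (D ^ k) p j)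
        (∑ p, (1 - D) i p * L p j) :=
      hasSum_sum fun p _ => ((hsum p j).hasSum.mul_left _)
    have he : (fun k : ℕ => ∑ p, (1 - D) i p * (D ^ k) p j)
        = fun k : ℕ => (D ^ k - D ^ (k + 1)) i j := by
      funext k
      rw [← Matrix.mul_apply]
      rw [show (1 - D) * D ^ k = D ^ k - D ^ (k + 1) by rw [sub_mul, one_mul, ← pow_succ']]
    rw [he] at hH
    have hq := hH.unique (htel i j)
    rw [Matrix.one_apply] at hq
    exact hq

end Aux

/-- Let `R` be a commutative complete Hausdorff non-archimedean first-countable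
topological ring and `M` an `R`-module. If a submodule `N ⊆ M` satisfies
`M = N + ∑ R°° · mᵢ` for finitely many `mᵢ ∈ M`, then `N = M`. -/
theorem submodule_eq_top_of_topNilpotent_span
    {R : Type*} [CommRing R] [UniformSpace R] [NonarchimedeanRing R]
    [IsUniformAddGroup R] [CompleteSpace R] [T2Space R]
    [FirstCountableTopology R]
    {M : Type*} [AddCommGroup M] [Module R M]
    (N : Submodule R M) (l : ℕ) (m : Fin l → M)
    (h : ∀ x : M, ∃ n ∈ N, ∃ c : Fin l → R,
      (∀ i, Filter.Tendsto (fun k => (c i) ^ k) Filter.atTop (nhds 0)) ∧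
      x = n + ∑ i, c i • m i) :
    N = ⊤ := by
  choose ν hν c htn hrel using fun i => h (m i)
  set D : Matrix (Fin l) (Fin l) R := Matrix.of (fun i j => c i j) with hDdef
  have hD : ∀ i j, Tendsto (fun n : ℕ => D i j ^ n) atTop (𝓝 0) := fun i j => htn i j
  obtain ⟨L, hL1, _hL2⟩ := neumann' D hD
  have key : ∀ j, ∑ p, (1 - D) j p • m p = ν j := by
    intro j
    have h1 : ∑ p, (1 - D) j p • m p
        = (∑ p, (1 : Matrix (Fin l) (Fin l) R) j p • m p) - ∑ p, D j p • m p := by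
      rw [← Finset.sum_sub_distrib]
      refine Finset.sum_congr rfl fun p _ => ?_
      rw [Matrix.sub_apply, sub_smul]
    have h2 : ∑ p, (1 : Matrix (Fin l) (Fin l) R) j p • m p = m j := by
      simp [Matrix.one_apply, ite_smul]
    rw [h1, h2]
    have h3 := hrel j
    have h4 : ∑ p, D j p • m p = ∑ p, c j p • m p := rfl
    rw [h4]
    rw [h3]
    abel
  have hmN : ∀ i, m i ∈ N := by
    intro i
    have hcalc : m i = ∑ j, L i j • ν j := by
      calc m i = ∑ p, (1 : Matrix (Fin l) (Fin l) R) i p • m p := by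
            simp [Matrix.one_apply, ite_smul]
        _ = ∑ p, (L * (1 - D)) i p • m p := by rw [hL1]
        _ = ∑ p, ∑ j, (L i j * (1 - D) j p) • m p := by
            refine Finset.sum_congr rfl fun p _ => ?_
            rw [Matrix.mul_apply, Finset.sum_smul]
        _ = ∑ j, ∑ p, (L i j * (1 - D) j p) • m p := Finset.sum_comm
        _ = ∑ j, L i j • ∑ p, (1 - D) j p • m p := by
            refine Finset.sum_congr rfl fun j _ => ?_
            rw [Finset.smul_sum]
            refine Finset.sum_congr rfl fun p _ => ?_
            rw [mul_smul]
        _ = ∑ j, L i j • ν j := by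
            refine Finset.sum_congr rfl fun j _ => ?_
            rw [key j]
    rw [hcalc]
    exact Submodule.sum_mem N fun j _ => Submodule.smul_mem N _ (hν j)
  rw [Submodule.eq_top_iff']
  intro x
  obtain ⟨n, hn, cc, _, rfl⟩ := h x
  exact Submodule.add_mem N hn (Submodule.sum_mem N fun i _ => Submodule.smul_mem N _ (hmN i))
end

section
/- Let R be a commutative complete Hausdorff non-archimedean topological ring with a countable fundamental system of open neighbourhoods of 0, admitting a sequence of units converging to 0, and such that the set R°° of topologically nilpotent elements is a neighbourhood of 0. Let M' be a metrisable complete topological R-module that is finitely generated as an R-module, and let M ⊆ M' be a dense submodule. Then M = M'. -/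
open Filter Topology Uniformity

section TNilp

variable {R : Type*} [CommRing R] [TopologicalSpace R] [IsTopologicalRing R]

lemma tnilp_neg {a : R} (h : Tendsto (fun n => a ^ n) atTop (𝓝 0)) :
    Tendsto (fun n => (-a) ^ n) atTop (𝓝 0) := by
  have h2 : Tendsto (fun n => -(a ^ n)) atTop (𝓝 0) := by simpa using h.neg
  rw [tendsto_def] at h h2 ⊢
  intro s hs
  filter_upwards [h s hs, h2 s hs] with n h1 h2
  rcases Nat.even_or_odd n with he | ho
  · rw [Set.mem_preimage, he.neg_pow]; exact h1
  · rw [Set.mem_preimage, ho.neg_pow]; exact h2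

lemma tnilp_mul {a b : R} (h : Tendsto (fun n => a ^ n) atTop (𝓝 0))
    (h' : Tendsto (fun n => b ^ n) atTop (𝓝 0)) :
    Tendsto (fun n => (a * b) ^ n) atTop (𝓝 0) := by
  have := h.mul h'
  rw [mul_zero] at this
  simpa [mul_pow] using this

lemma tnilp_add [NonarchimedeanRing R] {a b : R}
    (h : Tendsto (fun n => a ^ n) atTop (𝓝 0))
    (h' : Tendsto (fun n => b ^ n) atTop (𝓝 0)) :
    Tendsto (fun n => (a + b) ^ n) atTop (𝓝 0) := by
  rw [tendsto_def]
  intro s hs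
  obtain ⟨U, hUs⟩ := NonarchimedeanRing.is_nonarchimedean s hs
  obtain ⟨V, hV⟩ := NonarchimedeanRing.mul_subset U
  -- N : threshold for powers in V
  obtain ⟨N, hN⟩ := (((h.eventually (V.mem_nhds_zero)).and
    (h'.eventually (V.mem_nhds_zero))).exists_forall_of_atTop)
  -- thresholds for mixed terms
  have hmix : ∀ j : ℕ, ∃ Mj : ℕ, ∀ m ≥ Mj, a ^ j * b ^ m ∈ U ∧ b ^ j * a ^ m ∈ U := by
    intro j
    have t1 : Tendsto (fun m => a ^ j * b ^ m) atTop (𝓝 0) := by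
      simpa using h'.const_mul (a ^ j)
    have t2 : Tendsto (fun m => b ^ j * a ^ m) atTop (𝓝 0) := by
      simpa using h.const_mul (b ^ j)
    exact ((t1.eventually (U.mem_nhds_zero)).and
      (t2.eventually (U.mem_nhds_zero))).exists_forall_of_atTop
  choose Mf hMf using hmix
  set MM := (Finset.range N).sup Mf with hMM
  rw [show (fun n => (a + b) ^ n) ⁻¹' s ∈ atTop ↔ ∀ᶠ n in atTop, (a+b)^n ∈ s from Iff.rfl, eventually_atTop]
  refine ⟨N + N + MM, fun n hn => ?_⟩
  have : (a + b) ^ n ∈ U := by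
    rw [add_pow]
    refine AddSubgroup.sum_mem _ (fun j hj => ?_)
    rw [Finset.mem_range, Nat.lt_succ_iff] at hj
    have hterm : a ^ j * b ^ (n - j) ∈ U := by
      by_cases h1 : j < N
      · have hMle : Mf j ≤ MM := Finset.le_sup (Finset.mem_range.2 h1)
        exact (hMf j (n - j) (by omega)).1
      · by_cases h2 : n - j < N
        · have hMle : Mf (n - j) ≤ MM := Finset.le_sup (Finset.mem_range.2 h2)
          have := (hMf (n - j) j (by omega)).2
          rwa [mul_comm] at this
        · exact hV (Set.mul_mem_mul (hN j (by omega)).1 (hN (n - j) (by omega)).2)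
    have := AddSubgroup.nsmul_mem U.toAddSubgroup hterm (n.choose j)
    simpa [nsmul_eq_mul, mul_comm, mul_assoc, mul_left_comm] using this
  exact hUs this

end TNilp


section Unit

variable {R : Type*} [CommRing R] [UniformSpace R] [NonarchimedeanRing R]
  [IsUniformAddGroup R] [CompleteSpace R] [T2Space R]


lemma isUnit_one_add_tnilp {a : R} (h : Tendsto (fun n => a ^ n) atTop (𝓝 0)) :
    IsUnit (1 + a) := by
  have hna : Tendsto (fun n : ℕ => (-a) ^ n) atTop (𝓝 0) := tnilp_neg h
  have hsum : Summable (fun n : ℕ => (-a) ^ n) :=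
    NonarchimedeanAddGroup.summable_of_tendsto_cofinite_zero
      (by rwa [Nat.cofinite_eq_atTop])
  have hps : Tendsto (fun n => ∑ i ∈ Finset.range n, (-a) ^ i) atTop (𝓝 (∑' i, (-a) ^ i)) :=
    hsum.hasSum.tendsto_sum_nat
  have key : (∑' i, (-a) ^ i) * (1 + a) = 1 := by
    have h1 : Tendsto (fun n => (∑ i ∈ Finset.range n, (-a) ^ i) * (1 + a)) atTop
        (𝓝 ((∑' i, (-a) ^ i) * (1 + a))) := hps.mul_const _
    have h2 : Tendsto (fun n => (∑ i ∈ Finset.range n, (-a) ^ i) * (1 + a)) atTop (𝓝 1) := by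
      have : ∀ n, (∑ i ∈ Finset.range n, (-a) ^ i) * (1 + a) = 1 - (-a) ^ n := by
        intro n
        have := geom_sum_mul (-a) n
        have h' : (∑ i ∈ Finset.range n, (-a) ^ i) * (-(1 + a)) = (-a) ^ n - 1 := by
          rw [← this]; ring_nf
        calc (∑ i ∈ Finset.range n, (-a) ^ i) * (1 + a)
            = -((∑ i ∈ Finset.range n, (-a) ^ i) * (-(1 + a))) := by ring
          _ = -((-a) ^ n - 1) := by rw [h']
          _ = 1 - (-a) ^ n := by ring
      simp_rw [this]
      simpa using (tendsto_const_nhds (x := (1:R))).sub hna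
    have := tendsto_nhds_unique h1 h2
    exact this
  exact IsUnit.of_mul_eq_one _ ((mul_comm _ _).trans key)

end Unit


lemma det_one_add_mem {R : Type*} [CommRing R] (T : Set R) (h0 : (0:R) ∈ T)
    (hadd : ∀ {a b : R}, a ∈ T → b ∈ T → a + b ∈ T)
    (hneg : ∀ {a : R}, a ∈ T → -a ∈ T)
    (hmul : ∀ {a b : R}, a ∈ T → b ∈ T → a * b ∈ T)
    {k : ℕ} (E : Matrix (Fin k) (Fin k) R) (hE : ∀ i j, E i j ∈ T) :
    (1 + E).det - 1 ∈ T := by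
  classical
  let N : AddSubgroup R :=
    { carrier := T, zero_mem' := h0, add_mem' := hadd, neg_mem' := hneg }
  have hz : ∀ (n : ℤ) {t : R}, t ∈ T → (n : R) * t ∈ T := by
    intro n t ht
    have := AddSubgroup.zsmul_mem N ht n
    rwa [zsmul_eq_mul] at this
  let R₁ : Subring R :=
    { carrier := {x | ∃ n : ℤ, x - (n : R) ∈ T}
      zero_mem' := ⟨0, by simpa using h0⟩
      one_mem' := ⟨1, by simpa using h0⟩
      add_mem' := by
        rintro x y ⟨n, hn⟩ ⟨m, hm⟩
        exact ⟨n + m, by push_cast; convert hadd hn hm using 1; ring⟩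
      neg_mem' := by
        rintro x ⟨n, hn⟩
        exact ⟨-n, by push_cast; convert hneg hn using 1; ring⟩
      mul_mem' := by
        rintro x y ⟨n, hn⟩ ⟨m, hm⟩
        refine ⟨n * m, ?_⟩
        have : x * y - ((n * m : ℤ) : R)
            = (x - n) * (y - m) + (n : R) * (y - m) + (m : R) * (x - n) := by
          push_cast; ring
        rw [this]
        exact hadd (hadd (hmul hn hm) (hz n hm)) (hz m hn) }
  let N' : Ideal R₁ :=
    { carrier := {x : R₁ | (x : R) ∈ T}
      zero_mem' := h0
      add_mem' := fun ha hb => hadd ha hb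
      smul_mem' := by
        rintro ⟨r, n, hr⟩ ⟨x, hx⟩ hxT
        have : (r * x) = (r - (n:R)) * x + (n : R) * x := by ring
        show (r * x) ∈ T
        rw [this]
        exact hadd (hmul hr hxT) (hz n hxT) }
  let E₁ : Matrix (Fin k) (Fin k) R₁ := fun i j => ⟨E i j, 0, by simpa using hE i j⟩
  have hq : Ideal.Quotient.mk N' ((1 + E₁).det) = 1 := by
    rw [RingHom.map_det]
    have : (Ideal.Quotient.mk N').mapMatrix (1 + E₁) = 1 := by
      ext i j
      simp only [RingHom.mapMatrix_apply, Matrix.map_apply, Matrix.add_apply]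
      have hEij : Ideal.Quotient.mk N' (E₁ i j) = 0 :=
        (Ideal.Quotient.eq_zero_iff_mem).2 (by exact hE i j)
      rw [RingHom.map_add, hEij, add_zero]
      by_cases h : i = j <;> simp [Matrix.one_apply, h]
    rw [this, Matrix.det_one]
  have hmem : ((1 + E₁).det : R₁) - 1 ∈ N' := by
    have := (Ideal.Quotient.eq).1 (hq.trans (map_one (Ideal.Quotient.mk N')).symm)
    exact this
  have hcast : ((((1 + E₁).det : R₁)) : R) = (1 + E).det := by
    show R₁.subtype (1 + E₁).det = (1 + E).det
    rw [RingHom.map_det]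
    congr 1
    ext i j
    simp only [RingHom.mapMatrix_apply, Matrix.map_apply, Matrix.add_apply, RingHom.map_add]
    have h2 : R₁.subtype (E₁ i j) = E i j := rfl
    rw [h2]
    by_cases h : i = j <;> simp [Matrix.one_apply, h]
  have : (((1 + E₁).det : R₁) : R) - 1 ∈ T := hmem
  rwa [hcast] at this
/-- Let `R` be a commutative complete Hausdorff non-archimedean first-countable
topological ring with a sequence of units converging to `0` whose set of topologically
nilpotent elements is a neighbourhood of `0`. If `M'` is a metrisable complete
topological `R`-module that is finitely generated, then every dense submodule `M ⊆ M'`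
equals `M'`. -/
theorem dense_submodule_eq_top
    {R : Type*} [CommRing R] [UniformSpace R] [NonarchimedeanRing R]
    [IsUniformAddGroup R] [CompleteSpace R] [T2Space R]
    [FirstCountableTopology R]
    (hu : ∃ r : ℕ → Rˣ, Filter.Tendsto (fun n => (r n : R)) Filter.atTop (nhds 0))
    (hnil : {r : R | Filter.Tendsto (fun n => r ^ n) Filter.atTop (nhds 0)} ∈ nhds (0 : R))
    {M' : Type*} [AddCommGroup M'] [Module R M'] [UniformSpace M'] [IsUniformAddGroup M']
    [ContinuousSMul R M'] [T2Space M'] [FirstCountableTopology M']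
    [CompleteSpace M'] [Module.Finite R M']
    (M : Submodule R M') (hd : Dense (M : Set M')) :
    M = ⊤ := by
  classical
  set T : Set R := {r : R | Tendsto (fun n => r ^ n) atTop (𝓝 0)} with hTdef
  -- a topologically nilpotent unit
  obtain ⟨r, hr⟩ := hu
  obtain ⟨n₀, hn₀⟩ := (hr.eventually hnil).exists
  set π : Rˣ := r n₀ with hπdef
  have hπ : Tendsto (fun n => (π : R) ^ n) atTop (𝓝 0) := hn₀
  -- generators
  obtain ⟨k, e, he⟩ := Module.Finite.exists_fin (R := R) (M := M')
  -- Baire space instance on M'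
  haveI : (𝓤 M').IsCountablyGenerated := by
    rw [uniformity_eq_comap_nhds_zero M']
    exact Filter.comap.isCountablyGenerated _ _
  -- a decreasing chain of open subgroups of R, contained in T and forming a basis
  obtain ⟨B0, hB0T⟩ := NonarchimedeanRing.is_nonarchimedean _ hnil
  obtain ⟨s, hs⟩ := (𝓝 (0 : R)).exists_antitone_basis
  have hstep : ∀ (n : ℕ) (W : OpenAddSubgroup R),
      ∃ V : OpenAddSubgroup R, (V : Set R) ⊆ (W : Set R) ∩ s n := fun n W =>
    NonarchimedeanRing.is_nonarchimedean _
      (Filter.inter_mem W.mem_nhds_zero (hs.toHasBasis.mem_of_mem trivial))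
  choose nxt hnxt using hstep
  set B : ℕ → OpenAddSubgroup R := fun n => Nat.rec B0 nxt n with hBdef
  have hBsucc : ∀ n, (B (n + 1) : Set R) ⊆ (B n : Set R) ∩ s n := fun n => hnxt n (B n)
  have hBmono : ∀ m n, m ≤ n → (B n : Set R) ⊆ (B m : Set R) := by
    intro m n hmn
    induction n with
    | zero => have : m = 0 := Nat.le_zero.1 hmn; subst this; exact fun x hx => hx
    | succ p ih =>
      rcases Nat.lt_or_ge m (p + 1) with h | h
      · exact fun x hx => ih (by omega) ((hBsucc p hx).1)
      · have : m = p + 1 := by omega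
        subst this; exact fun x hx => hx
  have hBT : ∀ n, (B n : Set R) ⊆ T := fun n => (hBmono 0 n (Nat.zero_le n)).trans hB0T
  -- the additive subgroups of coefficient combinations
  set G : OpenAddSubgroup R → AddSubgroup M' := fun W =>
    { carrier := {x : M' | ∃ c : Fin k → R, (∀ i, c i ∈ W) ∧ ∑ i, c i • e i = x}
      zero_mem' := ⟨0, fun i => W.zero_mem, by simp⟩
      add_mem' := by
        rintro x y ⟨c, hc, rfl⟩ ⟨d', hd', rfl⟩
        exact ⟨c + d', fun i => W.toAddSubgroup.add_mem (hc i) (hd' i), by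
          simp [add_smul, Finset.sum_add_distrib]⟩
      neg_mem' := by
        rintro x ⟨c, hc, rfl⟩
        exact ⟨-c, fun i => W.toAddSubgroup.neg_mem (hc i), by
          simp [neg_smul, Finset.sum_neg_distrib]⟩ } with hGdef
  -- Baire category: the closure of `G W` is open
  have hGopen : ∀ W : OpenAddSubgroup R, IsOpen (closure (G W : Set M')) := by
    intro W
    have hclosed : ∀ n : ℕ,
        IsClosed ((fun x : M' => (π : R) ^ n • x) ⁻¹' closure (G W : Set M')) := fun n =>
      isClosed_closure.preimage (continuous_const_smul _)
    have hcov : ⋃ n : ℕ, (fun x : M' => (π : R) ^ n • x) ⁻¹' closure (G W : Set M')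
        = Set.univ := by
      refine Set.eq_univ_of_forall fun x => ?_
      have hx : x ∈ Submodule.span R (Set.range e) := by rw [he]; trivial
      obtain ⟨a, ha⟩ := (Submodule.mem_span_range_iff_exists_fun R).1 hx
      have hco : ∀ i : Fin k, Tendsto (fun n => (π : R) ^ n * a i) atTop (𝓝 0) := by
        intro i
        simpa using hπ.mul_const (a i)
      have hev : ∀ᶠ n in atTop, ∀ i, (π : R) ^ n * a i ∈ W :=
        eventually_all.2 fun i => (hco i).eventually W.mem_nhds_zero
      obtain ⟨n, hn⟩ := hev.exists
      refine Set.mem_iUnion.2 ⟨n, ?_⟩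
      have : (π : R) ^ n • x ∈ (G W : Set M') := by
        refine ⟨fun i => (π : R) ^ n * a i, hn, ?_⟩
        rw [← ha, Finset.smul_sum]
        exact Finset.sum_congr rfl fun i _ => (smul_smul _ _ _).symm
      exact Set.mem_preimage.2 (subset_closure this)
    obtain ⟨n, hn⟩ := nonempty_interior_of_iUnion_of_closed hclosed hcov
    -- transfer the interior through the homeomorphism given by scaling by the unit π^n
    have hom : ∀ x : M', (π : R) ^ n • x = (π ^ n : Rˣ) • x := by
      intro x
      rw [Units.smul_def, Units.val_pow_eq_pow_val]
    have hpre : (fun x : M' => (π : R) ^ n • x) ⁻¹' closure (G W : Set M')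
        = (Homeomorph.smul (π ^ n : Rˣ) (α := M')) ⁻¹' closure (G W : Set M') := by
      ext x
      simp [Homeomorph.smul, hom x]
    rw [hpre] at hn
    rw [← Homeomorph.preimage_interior] at hn
    obtain ⟨y, hy⟩ := hn
    have hyint : ((Homeomorph.smul (π ^ n : Rˣ) (α := M')) y) ∈
        interior (closure (G W : Set M')) := hy
    have hmemnhds : closure (G W : Set M') ∈ 𝓝 ((Homeomorph.smul (π ^ n : Rˣ) (α := M')) y) :=
      mem_interior_iff_mem_nhds.1 hyint
    exact AddSubgroup.isOpen_of_mem_nhds (G W).topologicalClosure hmemnhds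
  -- successive approximation: the closure of G (B 1) is contained in G (B 1)
  obtain ⟨w, hw⟩ := (𝓝 (0 : M')).exists_antitone_basis
  have hGcl0 : ∀ n : ℕ, (0 : M') ∈ closure (G (B n) : Set M') := fun n =>
    subset_closure (G (B n)).zero_mem
  have step : ∀ (n : ℕ) (y : M'), y ∈ closure (G (B (n + 1)) : Set M') →
      ∃ v : Fin k → R, (∀ i, v i ∈ B (n + 1)) ∧
        y - ∑ i, v i • e i ∈ closure (G (B (n + 2)) : Set M') ∧
        y - ∑ i, v i • e i ∈ w n := by
    intro n y hy
    have hV : (w n ∩ closure (G (B (n + 2)) : Set M')) ∈ 𝓝 (0 : M') :=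
      Filter.inter_mem (hw.toHasBasis.mem_of_mem trivial)
        (((hGopen (B (n + 2))).mem_nhds (hGcl0 (n + 2))))
    have hty : (fun z : M' => y - z) ⁻¹' (w n ∩ closure (G (B (n + 2)) : Set M')) ∈ 𝓝 y := by
      apply ContinuousAt.preimage_mem_nhds
      · exact (continuous_const.sub continuous_id).continuousAt
      · simpa using hV
    obtain ⟨z, hz1, hz2⟩ := mem_closure_iff_nhds.1 hy _ hty
    obtain ⟨c, hc, hcz⟩ := hz2
    exact ⟨c, hc, by rw [hcz]; exact (Set.mem_preimage.1 hz1).2,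
      by rw [hcz]; exact (Set.mem_preimage.1 hz1).1⟩
  choose! v hv1 hv2 hv3 using step
  have happrox : closure (G (B 1) : Set M') ⊆ (G (B 1) : Set M') := by
    intro x hx
    set d : ℕ → M' := fun n => Nat.rec x (fun m ym => ym - ∑ i, v m ym i • e i) n with hddef
    have hdsucc : ∀ n, d (n + 1) = d n - ∑ i, v n (d n) i • e i := fun n => rfl
    have hdcl : ∀ n, d n ∈ closure (G (B (n + 1)) : Set M') := by
      intro n
      induction n with
      | zero => exact hx
      | succ p ih => rw [hdsucc p]; exact (hv2 p (d p) ih)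
    set c : ℕ → Fin k → R := fun m => v m (d m) with hcdef
    have hc1 : ∀ n i, c n i ∈ B (n + 1) := fun n => hv1 n (d n) (hdcl n)
    have hdw : ∀ n, d (n + 1) ∈ w n := fun n => hv3 n (d n) (hdcl n)
    have hdiff : ∀ n, x - d n = ∑ m ∈ Finset.range n, ∑ i, c m i • e i := by
      intro n
      induction n with
      | zero => simp [hddef]
      | succ p ih =>
        rw [Finset.sum_range_succ, ← ih, hdsucc p]
        abel
    have htends : Tendsto d atTop (𝓝 (0 : M')) := by
      rw [hw.toHasBasis.tendsto_right_iff]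
      intro i _
      rw [eventually_atTop]
      refine ⟨i + 1, fun n hn => ?_⟩
      obtain ⟨m, rfl⟩ : ∃ m, n = m + 1 := ⟨n - 1, by omega⟩
      exact hw.antitone (by omega) (hdw m)
    -- coordinatewise sums
    have hsummable : ∀ i : Fin k, Summable (fun m => c m i) := by
      intro i
      apply NonarchimedeanAddGroup.summable_of_tendsto_cofinite_zero
      rw [Nat.cofinite_eq_atTop, hs.toHasBasis.tendsto_right_iff]
      intro j _
      rw [eventually_atTop]
      refine ⟨j, fun m hm => ?_⟩
      exact (hBsucc j ((hBmono (j + 1) (m + 1) (by omega)) (hc1 m i))).2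
    set L : Fin k → R := fun i => ∑' m, c m i with hLdef
    have hLtend : ∀ i, Tendsto (fun n => ∑ m ∈ Finset.range n, c m i) atTop (𝓝 (L i)) :=
      fun i => (hsummable i).hasSum.tendsto_sum_nat
    have hLmem : ∀ i, L i ∈ B 1 := by
      intro i
      refine (B 1).isClosed.mem_of_tendsto (hLtend i) (Filter.Eventually.of_forall fun n => ?_)
      exact AddSubgroup.sum_mem _ fun m _ => hBmono 1 (m + 1) (by omega) (hc1 m i)
    have hfinal : ∑ i, L i • e i = x := by
      have h1 : Tendsto (fun n => ∑ i, (∑ m ∈ Finset.range n, c m i) • e i) atTop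
          (𝓝 (∑ i, L i • e i)) :=
        tendsto_finset_sum _ fun i _ => (hLtend i).smul_const (e i)
      have h2 : Tendsto (fun n => ∑ i, (∑ m ∈ Finset.range n, c m i) • e i) atTop (𝓝 x) := by
        have hident : ∀ n, ∑ i, (∑ m ∈ Finset.range n, c m i) • e i = x - d n := by
          intro n
          rw [hdiff n, Finset.sum_comm]
          exact Finset.sum_congr rfl fun i _ => by rw [Finset.sum_smul]
        simp_rw [hident]
        simpa using (tendsto_const_nhds (x := x)).sub htends
      exact tendsto_nhds_unique h1 h2
    exact ⟨L, hLmem, hfinal⟩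
  have hGnhds : (G (B 1) : Set M') ∈ 𝓝 (0 : M') :=
    Filter.mem_of_superset ((hGopen (B 1)).mem_nhds (hGcl0 1)) happrox
  -- find approximations of the generators inside M
  have hmex : ∀ i : Fin k, ∃ m ∈ M, e i - m ∈ (G (B 1) : Set M') := by
    intro i
    have hti : (fun z : M' => e i - z) ⁻¹' (G (B 1) : Set M') ∈ 𝓝 (e i) := by
      apply ContinuousAt.preimage_mem_nhds
      · exact (continuous_const.sub continuous_id).continuousAt
      · simpa using hGnhds
    obtain ⟨z, hz1, hz2⟩ := mem_closure_iff_nhds.1 (hd (e i)) _ hti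
    exact ⟨z, hz2, Set.mem_preimage.1 hz1⟩
  choose m hmM hmG using hmex
  choose Emat hEmem hEeq using fun i => hmG i
  -- the matrix 1 - Emat is invertible
  set A : Matrix (Fin k) (Fin k) R := 1 + Matrix.of (fun i j => -(Emat i j)) with hAdef
  have hdetT : A.det - 1 ∈ T := by
    apply det_one_add_mem T
    · exact tendsto_const_nhds.congr' (by
        filter_upwards [eventually_ge_atTop 1] with n hn
        rw [zero_pow (by omega)])
    · intro a b ha hb; exact tnilp_add ha hb
    · intro a ha; exact tnilp_neg ha
    · intro a b ha hb; exact tnilp_mul ha hb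
    · intro i j
      exact tnilp_neg (hBT 1 (hEmem i j))
  have hdet : IsUnit A.det := by
    have := isUnit_one_add_tnilp (a := A.det - 1) hdetT
    simpa using this
  have hmAe : ∀ i, m i = ∑ j, A i j • e j := by
    intro i
    have : ∑ j, A i j • e j = e i - ∑ j, Emat i j • e j := by
      rw [hAdef]
      simp only [Matrix.add_apply, Matrix.of_apply, Matrix.one_apply]
      rw [Finset.sum_congr rfl (fun j _ => add_smul _ _ _)]
      rw [Finset.sum_add_distrib]
      simp [Finset.sum_ite_eq, neg_smul, Finset.sum_neg_distrib, sub_eq_add_neg]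
    rw [this, hEeq i]
    abel
  have heM : ∀ i, e i ∈ M := by
    intro i
    have hkey : e i = ∑ j, (A⁻¹ i j) • m j := by
      have h1 : ∑ j, (A⁻¹ i j) • m j = ∑ l, ((A⁻¹ * A) i l) • e l := by
        simp_rw [hmAe, Finset.smul_sum, smul_smul]
        rw [Finset.sum_comm]
        refine Finset.sum_congr rfl fun l _ => ?_
        rw [Matrix.mul_apply, Finset.sum_smul]
      rw [h1, Matrix.nonsing_inv_mul A hdet]
      simp [Matrix.one_apply]
    rw [hkey]
    exact Submodule.sum_mem _ fun j _ => M.smul_mem _ (hmM j)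
  rw [← top_le_iff, ← he, Submodule.span_le]
  rintro x ⟨i, rfl⟩
  exact heM i
end

section
/- Let R be a commutative complete Hausdorff non-archimedean topological ring with a countable fundamental system of open neighbourhoods of 0, admitting a sequence of units converging to 0, and such that the set R°° of topologically nilpotent elements is a neighbourhood of 0. Then R is a noetherian ring if and only if every ideal of R is closed in R. -/
open Filter Topology Set Uniformity

set_option linter.unusedSectionVars false
set_option maxHeartbeats 1000000

namespace NoethClosedAux

variable {R : Type*} [CommRing R] [UniformSpace R] [NonarchimedeanRing R]
  [IsUniformAddGroup R] [CompleteSpace R] [T2Space R] [FirstCountableTopology R]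

theorem exists_basis : ∃ W : ℕ → OpenAddSubgroup R, (∀ n, (W (n+1) : Set R) ⊆ W n)
    ∧ ∀ U ∈ 𝓝 (0 : R), ∃ n, (W n : Set R) ⊆ U := by
  obtain ⟨b, hb⟩ := (𝓝 (0 : R)).exists_antitone_basis
  have h : ∀ n : ℕ, ∃ V : OpenAddSubgroup R, (V : Set R) ⊆ b n := fun n =>
    NonarchimedeanAddGroup.is_nonarchimedean _ (hb.mem n)
  choose V hV using h
  refine ⟨fun n => Nat.rec (V 0) (fun n Wn => V (n+1) ⊓ Wn) n, fun n => inf_le_right, ?_⟩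
  intro U hU
  obtain ⟨n, -, hn⟩ := hb.toHasBasis.mem_iff.mp hU
  refine ⟨n, subset_trans ?_ (subset_trans (hV n) hn)⟩
  cases n with
  | zero => exact subset_rfl
  | succ n => exact inf_le_left

theorem cauchy_partial_sums {t : ℕ → R} (ht : Tendsto t atTop (𝓝 0)) :
    CauchySeq fun n => ∑ i ∈ Finset.range n, t i := by
  rw [cauchySeq_iff_tendsto, uniformity_eq_comap_nhds_zero R, tendsto_comap_iff, tendsto_def]
  intro U hU
  obtain ⟨W, hW⟩ := NonarchimedeanAddGroup.is_nonarchimedean U hU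
  obtain ⟨N, hN⟩ := (ht.eventually (W.mem_nhds_zero)).exists_forall_of_atTop
  have key : ∀ m n : ℕ, N ≤ m → m ≤ n →
      (∑ i ∈ Finset.range n, t i) - (∑ i ∈ Finset.range m, t i) ∈ W := by
    intro m n hm hmn
    rw [← Finset.sum_Ico_eq_sub _ hmn]
    exact AddSubgroup.sum_mem _ fun i hi => hN i (le_trans hm (Finset.mem_Ico.mp hi).1)
  rw [mem_atTop_sets]
  refine ⟨(N, N), fun p hp => hW ?_⟩
  have h1 : N ≤ p.1 := hp.1
  have h2 : N ≤ p.2 := hp.2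
  rcases le_total p.1 p.2 with h | h
  · exact key p.1 p.2 h1 h
  · simpa using W.neg_mem (key p.2 p.1 h2 h)

theorem isUnit_one_sub {u : R} (hu : Tendsto (fun n => u ^ n) atTop (𝓝 0)) :
    IsUnit (1 - u) := by
  have hc := cauchy_partial_sums hu
  obtain ⟨s, hs⟩ := cauchySeq_tendsto_of_complete hc
  refine IsUnit.of_mul_eq_one s ?_
  have h1 : Tendsto (fun n => (1 - u) * ∑ i ∈ Finset.range n, u ^ i) atTop (𝓝 ((1 - u) * s)) :=
    hs.const_mul _
  have h2 : (fun n => (1 - u) * ∑ i ∈ Finset.range n, u ^ i) = fun n => 1 - u ^ n := by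
    funext n
    have := geom_sum_mul u n
    linear_combination -this
  rw [h2] at h1
  have h3 : Tendsto (fun n : ℕ => 1 - u ^ n) atTop (𝓝 (1 - 0)) := tendsto_const_nhds.sub hu
  have := tendsto_nhds_unique h1 h3
  rw [sub_zero] at this
  exact this

theorem isUnit_one_add {v : R} (hv : Tendsto (fun n => v ^ n) atTop (𝓝 0)) :
    IsUnit (1 + v) := by
  have hneg : Tendsto (fun n => (-v) ^ n) atTop (𝓝 0) := by
    rw [tendsto_def]
    intro U hU
    obtain ⟨W, hW⟩ := NonarchimedeanAddGroup.is_nonarchimedean U hU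
    filter_upwards [hv.eventually (W.mem_nhds_zero)] with n hn
    apply hW
    show (-v) ^ n ∈ W
    rcases Nat.even_or_odd n with h | h
    · rwa [h.neg_pow]
    · rw [h.neg_pow]; exact W.neg_mem hn
  have := isUnit_one_sub hneg
  rwa [sub_neg_eq_add] at this

theorem noeth_of_closed (π : Rˣ) (hπ : Tendsto (fun n => (π : R) ^ n) atTop (𝓝 0))
    (hcl : ∀ I : Ideal R, IsClosed (I : Set R)) : IsNoetherianRing R := by
  rw [isNoetherianRing_iff, ← monotone_stabilizes_iff_noetherian]
  intro f
  set J : Submodule R R := ⨆ n, f n with hJ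
  haveI : (𝓤 R).IsCountablyGenerated := IsUniformAddGroup.uniformity_countably_generated
  have hJc : IsClosed ((J : Ideal R) : Set R) := hcl J
  haveI := hJc.completeSpace_coe
  haveI : (𝓤 ↥(J : Set R)).IsCountablyGenerated := by
    rw [uniformity_subtype]; exact Filter.comap.isCountablyGenerated _ _
  haveI : Nonempty ↥(J : Set R) := ⟨⟨0, J.zero_mem⟩⟩
  -- Baire
  have hcover : ∀ y : ↥(J : Set R), ∃ n, (y : R) ∈ f n := by
    intro y
    exact (Submodule.mem_iSup_of_chain f (y : R)).mp y.2
  obtain ⟨N, x, hx⟩ := nonempty_interior_of_iUnion_of_closed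
    (f := fun n => (Subtype.val ⁻¹' (f n : Set R) : Set ↥(J : Set R)))
    (fun n => (hcl (f n)).preimage continuous_subtype_val)
    (by
      apply Set.eq_univ_of_forall
      intro y
      obtain ⟨n, hn⟩ := hcover y
      exact Set.mem_iUnion.mpr ⟨n, hn⟩)
  -- extract neighbourhood
  have hxC : (x : R) ∈ f N := Set.mem_preimage.mp (interior_subset hx)
  have hnhds := mem_interior_iff_mem_nhds.mp hx
  rw [nhds_subtype_eq_comap, mem_comap] at hnhds
  obtain ⟨s, hs, hsub⟩ := hnhds
  obtain ⟨M0, hM0⟩ := hcover x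
  refine ⟨max N M0, fun m hm => ?_⟩
  have hJle : J ≤ f (max N M0) := by
    intro y hy
    -- π ^ j * y tends to 0, so x + π^j y ∈ s eventually
    have h1 : Tendsto (fun j => (x : R) + (π : R) ^ j * y) atTop (𝓝 ((x : R) + 0 * y)) :=
      tendsto_const_nhds.add (hπ.mul_const y)
    rw [zero_mul, add_zero] at h1
    have h2 : ∀ᶠ j in atTop, (x : R) + (π : R) ^ j * y ∈ s := h1.eventually_mem hs
    obtain ⟨j, hj⟩ := h2.exists
    have hmem : (x : R) + (π : R) ^ j * y ∈ J := J.add_mem x.2 (J.smul_mem _ hy)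
    have hfN : (x : R) + (π : R) ^ j * y ∈ f N := hsub (Set.mem_preimage.mpr (by exact hj : ((⟨_, hmem⟩ : ↥(J : Set R)) : R) ∈ s))
    have hstep : (π : R) ^ j * y ∈ f (max N M0) := by
      have h3 : ((x : R) + (π : R) ^ j * y) - (x : R) ∈ f (max N M0) :=
        Submodule.sub_mem _ (f.mono (le_max_left N M0) hfN) (f.mono (le_max_right N M0) hM0)
      simpa using h3
    have : ((π⁻¹ : Rˣ) : R) ^ j • ((π : R) ^ j * y) ∈ f (max N M0) :=
      Submodule.smul_mem _ _ hstep
    have hy' : ((π⁻¹ : Rˣ) : R) ^ j • ((π : R) ^ j * y) = y := by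
      rw [smul_eq_mul, ← mul_assoc, ← mul_pow]
      simp
    rwa [hy'] at this
  have h1 : f (max N M0) ≤ f m := f.mono hm
  have h2 : f m ≤ f (max N M0) := le_trans (le_iSup f m) hJle
  exact le_antisymm h1 h2

variable {ι : Type*} [Fintype ι]

/-- The sum-of-multiples map. -/
def phiMap (b : ι → R) : (ι → R) →+ R where
  toFun c := ∑ i, c i * b i
  map_zero' := by simp
  map_add' c d := by simp [add_mul, Finset.sum_add_distrib]

/-- combinations with coefficients in `W`. -/
def comb (b : ι → R) (W : AddSubgroup R) : AddSubgroup R :=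
  AddSubgroup.map (phiMap b) (AddSubgroup.pi Set.univ fun _ => W)

theorem mem_comb {b : ι → R} {W : AddSubgroup R} {x : R} :
    x ∈ comb b W ↔ ∃ c : ι → R, (∀ i, c i ∈ W) ∧ ∑ i, c i * b i = x := by
  constructor
  · rintro ⟨c, hc, rfl⟩
    exact ⟨c, fun i => hc i trivial, rfl⟩
  · rintro ⟨c, hc, rfl⟩
    exact ⟨c, fun i _ => hc i, rfl⟩

theorem comb_subset {J : Ideal R} {b : ι → R} (hbJ : ∀ i, b i ∈ J) (W : AddSubgroup R) :
    (comb b W : Set R) ⊆ J := by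
  rintro x hx
  obtain ⟨c, -, rfl⟩ := mem_comb.mp hx
  exact Ideal.sum_mem _ fun i _ => J.mul_mem_left _ (hbJ i)

theorem baire_step (J : Ideal R) (hJc : IsClosed (J : Set R)) (b : ι → R)
    (hspan : ∀ x ∈ J, ∃ c : ι → R, ∑ i, c i * b i = x)
    (r : ℕ → Rˣ) (hr : Tendsto (fun n => (r n : R)) atTop (𝓝 0))
    (W : OpenAddSubgroup R) :
    ∃ V : OpenAddSubgroup R,
      (J : Set R) ∩ V ⊆ closure (comb b W.toAddSubgroup : Set R) := by
  haveI : (𝓤 R).IsCountablyGenerated := IsUniformAddGroup.uniformity_countably_generated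
  haveI := hJc.completeSpace_coe
  haveI : (𝓤 ↥(J : Set R)).IsCountablyGenerated := by
    rw [uniformity_subtype]; exact Filter.comap.isCountablyGenerated _ _
  haveI : Nonempty ↥(J : Set R) := ⟨⟨0, J.zero_mem⟩⟩
  set E : Set R := closure (comb b W.toAddSubgroup : Set R) with hE
  -- Baire covering
  obtain ⟨N, x, hx⟩ := nonempty_interior_of_iUnion_of_closed
    (f := fun n => ({y : ↥(J : Set R) | (r n : R) * (y : R) ∈ E} : Set ↥(J : Set R)))
    (fun n => (isClosed_closure.preimage (continuous_const.mul continuous_subtype_val)))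
    (by
      apply Set.eq_univ_of_forall
      intro y
      obtain ⟨c, hc⟩ := hspan (y : R) y.2
      have hev : ∀ᶠ n in atTop, ∀ i, (r n : R) * c i ∈ W.toAddSubgroup := by
        rw [eventually_all]
        intro i
        exact (hr.mul_const (c i)).eventually_mem (by simpa using W.mem_nhds_zero)
      obtain ⟨n, hn⟩ := hev.exists
      refine Set.mem_iUnion.mpr ⟨n, ?_⟩
      show (r n : R) * (y : R) ∈ E
      apply subset_closure
      rw [← hc, Finset.mul_sum]
      exact mem_comb.mpr ⟨fun i => (r n : R) * c i, hn, by simp [mul_assoc]⟩)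
  -- translate interior point into conclusion
  have hxE : (r N : R) * (x : R) ∈ E := by
    have := interior_subset hx
    simpa using this
  have hnhds := mem_interior_iff_mem_nhds.mp hx
  rw [nhds_subtype_eq_comap, mem_comap] at hnhds
  obtain ⟨s, hs, hsub⟩ := hnhds
  have hs0 : (fun w => (x : R) + w) ⁻¹' s ∈ 𝓝 (0 : R) := by
    have : ContinuousAt (fun w => (x : R) + w) 0 := (continuous_const.add continuous_id).continuousAt
    exact this.preimage_mem_nhds (by simpa using hs)
  obtain ⟨U, hU⟩ := NonarchimedeanAddGroup.is_nonarchimedean _ hs0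
  -- V := preimage of U under multiplication by (r N)⁻¹
  refine ⟨⟨AddSubgroup.comap (AddMonoidHom.mulLeft (((r N)⁻¹ : Rˣ) : R)) U.toAddSubgroup,
    U.isOpen.preimage (continuous_const.mul continuous_id)⟩, ?_⟩
  rintro v ⟨hvJ, hvV⟩
  have hw : (((r N)⁻¹ : Rˣ) : R) * v ∈ U := hvV
  have hwJ : (((r N)⁻¹ : Rˣ) : R) * v ∈ J := J.mul_mem_left _ hvJ
  have hxw : ((x : R) + (((r N)⁻¹ : Rˣ) : R) * v) ∈ J := J.add_mem x.2 hwJ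
  have hmem : (⟨_, hxw⟩ : ↥(J : Set R)) ∈ Subtype.val ⁻¹' s := hU hw
  have hE2 : (r N : R) * ((x : R) + (((r N)⁻¹ : Rˣ) : R) * v) ∈ E := hsub hmem
  have hsub2 : (r N : R) * ((x : R) + (((r N)⁻¹ : Rˣ) : R) * v) - (r N : R) * (x : R) ∈ E := by
    have hEgrp : ∀ a ∈ E, ∀ c ∈ E, a - c ∈ E := by
      intro a ha c hc
      exact AddSubgroup.sub_mem (comb b W.toAddSubgroup).topologicalClosure ha hc
    exact hEgrp _ hE2 _ hxE
  have : (r N : R) * ((((r N)⁻¹ : Rˣ) : R) * v) ∈ E := by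
    rw [mul_add] at hsub2
    simpa using hsub2
  have heq : (r N : R) * ((((r N)⁻¹ : Rˣ) : R) * v) = v := by
    rw [← mul_assoc]
    simp
  rwa [heq] at this

theorem comb_small (b : ι → R)
    (W : ℕ → OpenAddSubgroup R) (hdec : ∀ n, (W (n+1) : Set R) ⊆ W n)
    (hbasis : ∀ U ∈ 𝓝 (0 : R), ∃ n, (W n : Set R) ⊆ U) :
    ∀ U ∈ 𝓝 (0 : R), ∃ k0, ∀ k, k0 ≤ k → closure (comb b (W k).toAddSubgroup : Set R) ⊆ U := by
  have hmono : Antitone fun n => (W n : Set R) := antitone_nat_of_succ_le fun n => hdec n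
  intro U hU
  obtain ⟨kz, hkz⟩ := hbasis U hU
  have hcont : ∀ i : ι, ∃ k, ∀ w ∈ W k, w * b i ∈ W kz := by
    intro i
    have : Tendsto (fun z : R => z * b i) (𝓝 0) (𝓝 0) := by
      simpa using (continuous_mul_right (b i)).tendsto 0
    obtain ⟨k, hk⟩ := hbasis _ (this (W kz).mem_nhds_zero)
    exact ⟨k, fun w hw => hk hw⟩
  choose kk hkk using hcont
  obtain ⟨k0, hk0⟩ : ∃ k0, ∀ i : ι, kk i ≤ k0 := Finite.exists_le kk
  refine ⟨k0, fun k hk => ?_⟩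
  have hsub : (comb b (W k).toAddSubgroup : Set R) ⊆ (W kz : Set R) := by
    intro x hx
    obtain ⟨c, hc, rfl⟩ := mem_comb.mp hx
    refine AddSubgroup.sum_mem _ fun i _ => ?_
    exact hkk i _ (hmono (le_trans (hk0 i) hk) (hc i))
  exact subset_trans (closure_minimal hsub (W kz).isClosed) hkz

theorem absorb (J : Ideal R) (hJc : IsClosed (J : Set R)) (b : ι → R) (hbJ : ∀ i, b i ∈ J)
    (hspan : ∀ x ∈ J, ∃ c : ι → R, ∑ i, c i * b i = x)
    (r : ℕ → Rˣ) (hr : Tendsto (fun n => (r n : R)) atTop (𝓝 0))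
    (W : ℕ → OpenAddSubgroup R) (hdec : ∀ n, (W (n+1) : Set R) ⊆ W n)
    (hbasis : ∀ U ∈ 𝓝 (0 : R), ∃ n, (W n : Set R) ⊆ U) (n : ℕ) :
    closure (comb b (W (n+1)).toAddSubgroup : Set R) ⊆ (comb b (W n).toAddSubgroup : Set R) := by
  have hmono : Antitone fun n => (W n : Set R) := antitone_nat_of_succ_le fun n => hdec n
  set cE : ℕ → Set R := fun s => closure (comb b (W s).toAddSubgroup : Set R) with hcE
  have hVs : ∀ s : ℕ, ∃ V : OpenAddSubgroup R, (J : Set R) ∩ V ⊆ cE s := fun s =>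
    baire_step J hJc b hspan r hr (W s)
  choose V hV using hVs
  have hcEJ : ∀ s, cE s ⊆ (J : Set R) := fun s =>
    closure_minimal (comb_subset hbJ _) hJc
  have step : ∀ s : ℕ, ∀ y ∈ cE s, ∃ c : ι → R,
      (∀ i, c i ∈ W s) ∧ y - ∑ i, c i * b i ∈ cE (s + 1) := by
    intro s y hy
    have ht : {z : R | z - y ∈ V (s+1)} ∈ 𝓝 y := by
      have : IsOpen {z : R | z - y ∈ V (s+1)} :=
        (V (s+1)).isOpen.preimage (continuous_sub_right y)
      exact this.mem_nhds (by simpa using (V (s+1)).zero_mem)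
    obtain ⟨z, hzt, hzE⟩ := mem_closure_iff_nhds.mp hy _ ht
    obtain ⟨c, hc, hzc⟩ := mem_comb.mp hzE
    refine ⟨c, hc, ?_⟩
    rw [hzc]
    apply hV (s+1)
    constructor
    · exact Submodule.sub_mem _ (hcEJ s hy) (comb_subset hbJ _ hzE)
    · have : -(z - y) ∈ V (s+1) := AddSubgroup.neg_mem _ hzt
      simpa using this
  intro y₀ hy₀
  -- recursive sequence
  let seq : ∀ j : ℕ, {y : R // y ∈ cE (n+1+j)} := fun j =>
    Nat.rec ⟨y₀, hy₀⟩ (fun j p =>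
      ⟨p.1 - ∑ i, (Classical.choose (step (n+1+j) p.1 p.2)) i * b i,
        (Classical.choose_spec (step (n+1+j) p.1 p.2)).2⟩) j
  let c : ℕ → ι → R := fun j => Classical.choose (step (n+1+j) (seq j).1 (seq j).2)
  have hc1 : ∀ j i, c j i ∈ W (n+1+j) := fun j =>
    (Classical.choose_spec (step (n+1+j) (seq j).1 (seq j).2)).1
  have hrec : ∀ j, (seq (j+1)).1 = (seq j).1 - ∑ i, c j i * b i := fun j => rfl
  have htel : ∀ k, (seq k).1 = y₀ - ∑ j ∈ Finset.range k, ∑ i, c j i * b i := by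
    intro k
    induction k with
    | zero => simp [seq]
    | succ k ih => rw [hrec k, ih, Finset.sum_range_succ]; ring
  -- coordinatewise limits
  have hγ : ∀ i : ι, ∃ γ : R, γ ∈ W (n+1) ∧
      Tendsto (fun k => ∑ j ∈ Finset.range k, c j i) atTop (𝓝 γ) := by
    intro i
    have hterm : Tendsto (fun j => c j i) atTop (𝓝 0) := by
      rw [tendsto_def]
      intro U hU
      obtain ⟨k0, hk0⟩ := hbasis U hU
      rw [mem_atTop_sets]
      exact ⟨k0, fun j hj => hk0 (hmono (by omega : k0 ≤ n+1+j) (hc1 j i))⟩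
    obtain ⟨γ, hγt⟩ := cauchySeq_tendsto_of_complete (cauchy_partial_sums hterm)
    refine ⟨γ, ?_, hγt⟩
    refine (W (n+1)).isClosed.mem_of_tendsto hγt (Eventually.of_forall fun k => ?_)
    exact AddSubgroup.sum_mem _ fun j _ => hmono (by omega : n+1 ≤ n+1+j) (hc1 j i)
  choose γ hγW hγt using hγ
  -- limit identity
  have h4 : Tendsto (fun k => ∑ i, (∑ j ∈ Finset.range k, c j i) * b i) atTop
      (𝓝 (∑ i, γ i * b i)) :=
    tendsto_finset_sum _ fun i _ => (hγt i).mul_const _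
  have h5 : ∀ k, ∑ i, (∑ j ∈ Finset.range k, c j i) * b i = y₀ - (seq k).1 := by
    intro k
    rw [htel k, sub_sub_cancel, Finset.sum_comm]
    simp [Finset.sum_mul]
  have h6 : Tendsto (fun k => (seq k).1) atTop (𝓝 0) := by
    rw [tendsto_def]
    intro U hU
    obtain ⟨k0, hk0⟩ := comb_small b W hdec hbasis U hU
    rw [mem_atTop_sets]
    exact ⟨k0, fun k hk => hk0 (n+1+k) (by omega) (seq k).2⟩
  have h7 : Tendsto (fun k => y₀ - (seq k).1) atTop (𝓝 (y₀ - 0)) :=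
    tendsto_const_nhds.sub h6
  rw [sub_zero] at h7
  have h8 : ∑ i, γ i * b i = y₀ := by
    apply tendsto_nhds_unique _ h7
    convert h4 using 1
    funext k
    rw [h5 k]
  rw [← h8]
  exact mem_comb.mpr ⟨γ, fun i => hdec n (hγW i), rfl⟩

theorem closed_of_noeth
    (r : ℕ → Rˣ) (hr : Tendsto (fun n => (r n : R)) atTop (𝓝 0))
    (hnil : {v : R | Tendsto (fun n => v ^ n) atTop (𝓝 0)} ∈ 𝓝 (0 : R))
    (hNoeth : IsNoetherianRing R) (I : Ideal R) : IsClosed (I : Set R) := by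
  classical
  obtain ⟨W, hdec, hbasis⟩ := exists_basis (R := R)
  have hmono : Antitone fun n => (W n : Set R) := antitone_nat_of_succ_le fun n => hdec n
  set J : Ideal R := I.closure with hJdef
  have hJset : (J : Set R) = closure (I : Set R) := Ideal.coe_closure I
  have hJc : IsClosed (J : Set R) := by rw [hJset]; exact isClosed_closure
  have hIJ : I ≤ J := fun x hx => by
    show x ∈ (J : Set R); rw [hJset]; exact subset_closure hx
  -- finite generation
  haveI := hNoeth
  obtain ⟨s, hsJ⟩ : J.FG := IsNoetherian.noetherian J
  set b : {x // x ∈ s} → R := fun i => (i : R) with hb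
  have hbJ : ∀ i, b i ∈ J := fun i => hsJ ▸ Submodule.subset_span i.2
  have hspan : ∀ x ∈ J, ∃ c : {x // x ∈ s} → R, ∑ i, c i * b i = x := by
    intro x hx
    rw [← hsJ] at hx
    obtain ⟨f, -, hf⟩ := Submodule.mem_span_finset.mp hx
    refine ⟨fun i => f (i : R), ?_⟩
    rw [← hf, ← Finset.sum_attach s (fun i => f i • i)]
    simp [smul_eq_mul, hb]
  -- determinant neighbourhood
  have hdet : ∃ k : ℕ, ∀ F : {x // x ∈ s} → {x // x ∈ s} → R,
      (∀ i l, F i l ∈ W k) →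
      IsUnit ((1 - Matrix.of F : Matrix {x // x ∈ s} {x // x ∈ s} R).det) := by
    by_contra hcon
    push_neg at hcon
    choose F hF1 hF2 using hcon
    have hF0 : Tendsto F atTop (𝓝 0) := by
      rw [tendsto_pi_nhds]
      intro i
      rw [tendsto_pi_nhds]
      intro l
      rw [tendsto_def]
      intro U hU
      obtain ⟨k0, hk0⟩ := hbasis U hU
      rw [mem_atTop_sets]
      exact ⟨k0, fun k hk => hk0 (hmono hk (hF1 k i l))⟩
    have hδc : Continuous fun F : {x // x ∈ s} → {x // x ∈ s} → R =>
        ((1 - Matrix.of F : Matrix {x // x ∈ s} {x // x ∈ s} R).det) - 1 := by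
      have h1 : Continuous fun F : {x // x ∈ s} → {x // x ∈ s} → R =>
          (1 - Matrix.of F : Matrix {x // x ∈ s} {x // x ∈ s} R) := by
        exact continuous_const.sub continuous_id
      exact (h1.matrix_det).sub continuous_const
    have h2 : Tendsto (fun k => ((1 - Matrix.of (F k) : Matrix {x // x ∈ s} {x // x ∈ s} R).det) - 1) atTop
        (𝓝 ((1 - Matrix.of (0 : {x // x ∈ s} → {x // x ∈ s} → R) : Matrix {x // x ∈ s} {x // x ∈ s} R).det - 1)) :=
      (hδc.tendsto 0).comp hF0
    have h0 : ((1 - Matrix.of (0 : {x // x ∈ s} → {x // x ∈ s} → R) : Matrix {x // x ∈ s} {x // x ∈ s} R).det - 1) = 0 := by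
      have : Matrix.of (0 : {x // x ∈ s} → {x // x ∈ s} → R) = (0 : Matrix {x // x ∈ s} {x // x ∈ s} R) := rfl
      rw [this, sub_zero, Matrix.det_one, sub_self]
    rw [h0] at h2
    have hev := h2.eventually_mem hnil
    obtain ⟨k, hkS⟩ := hev.exists
    apply hF2 k
    have := isUnit_one_add hkS
    have heq : 1 + ((1 - Matrix.of (F k) : Matrix {x // x ∈ s} {x // x ∈ s} R).det - 1)
        = (1 - Matrix.of (F k) : Matrix {x // x ∈ s} {x // x ∈ s} R).det := by ring
    rwa [heq] at this
  obtain ⟨k, hk⟩ := hdet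
  -- smallness step
  obtain ⟨V, hV⟩ := baire_step (ι := {x // x ∈ s}) J hJc b hspan r hr (W (k+1))
  have hVk : (J : Set R) ∩ V ⊆ (comb b (W k).toAddSubgroup : Set R) :=
    fun x hx => absorb (ι := {x // x ∈ s}) J hJc b hbJ hspan r hr W hdec hbasis k (hV hx)
  -- approximate each generator
  have happrox : ∀ i, ∃ a : R, a ∈ I ∧ b i - a ∈ (J : Set R) ∩ V := by
    intro i
    have hbi : b i ∈ closure (I : Set R) := by rw [← hJset]; exact hbJ i
    have ht : {z : R | b i - z ∈ V} ∈ 𝓝 (b i) := by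
      have ho : IsOpen {z : R | b i - z ∈ V} := V.isOpen.preimage (continuous_const.sub continuous_id)
      exact ho.mem_nhds (by simpa using V.zero_mem)
    obtain ⟨a, hat, haI⟩ := mem_closure_iff_nhds.mp hbi _ ht
    exact ⟨a, haI, ⟨J.sub_mem (hbJ i) (hIJ haI), hat⟩⟩
  choose a haI haV using happrox
  have hcoef : ∀ i, ∃ c : {x // x ∈ s} → R, (∀ l, c l ∈ W k) ∧ ∑ l, c l * b l = b i - a i :=
    fun i => mem_comb.mp (hVk (haV i))
  choose F hF1 hF2 using hcoef
  -- matrix identity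
  set M : Matrix {x // x ∈ s} {x // x ∈ s} R := 1 - Matrix.of F with hM
  have hMv : M.mulVec b = a := by
    funext i
    show ∑ l, M i l * b l = a i
    have : ∀ l, M i l = (if i = l then 1 else 0) - F i l := by
      intro l; simp [hM, Matrix.one_apply, Matrix.sub_apply]
    simp only [this, sub_mul, ite_mul, one_mul, zero_mul, Finset.sum_sub_distrib,
      Finset.sum_ite_eq, Finset.mem_univ, if_true]
    rw [hF2 i]
    ring
  have hdu : IsUnit M.det := hk F hF1
  have hadj : M.det • b = M.adjugate.mulVec a := by
    rw [← hMv, Matrix.mulVec_mulVec, Matrix.adjugate_mul, Matrix.smul_mulVec,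
      Matrix.one_mulVec]
  have hbI : ∀ i, b i ∈ I := by
    intro i
    have h1 : M.det * b i = ∑ l, M.adjugate i l * a l := by
      have := congrFun hadj i
      simpa [Pi.smul_apply, smul_eq_mul, Matrix.mulVec, dotProduct] using this
    have h2 : M.det * b i ∈ I := by
      rw [h1]
      exact Ideal.sum_mem _ fun l _ => I.mul_mem_left _ (haI l)
    obtain ⟨d, hd⟩ := hdu
    have : ((d⁻¹ : Rˣ) : R) * (M.det * b i) ∈ I := I.mul_mem_left _ h2
    rwa [← hd, ← mul_assoc, Units.inv_mul, one_mul] at this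
  -- conclude
  have hJI : (J : Set R) ⊆ (I : Set R) := by
    have : J ≤ I := by
      rw [← hsJ, Ideal.span_le]
      intro x hx
      exact hbI ⟨x, hx⟩
    exact this
  apply isClosed_of_closure_subset
  rw [← hJset]
  exact hJI

end NoethClosedAux

/-- Let `R` be a commutative complete Hausdorff non-archimedean first-countable
topological ring with a sequence of units converging to `0` whose set of topologically
nilpotent elements is a neighbourhood of `0`. Then `R` is noetherian if and only if
every ideal of `R` is closed. -/
theorem noetherianRing_iff_ideals_closed
    {R : Type*} [CommRing R] [UniformSpace R] [NonarchimedeanRing R]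
    [IsUniformAddGroup R] [CompleteSpace R] [T2Space R]
    [FirstCountableTopology R]
    (hu : ∃ r : ℕ → Rˣ, Filter.Tendsto (fun n => (r n : R)) Filter.atTop (nhds 0))
    (hnil : {r : R | Filter.Tendsto (fun n => r ^ n) Filter.atTop (nhds 0)} ∈ nhds (0 : R)) :
    IsNoetherianRing R ↔ ∀ I : Ideal R, IsClosed (I : Set R) := by
  obtain ⟨r, hr⟩ := hu
  constructor
  · intro h I
    exact NoethClosedAux.closed_of_noeth r hr hnil h I
  · intro h
    obtain ⟨N, hN⟩ := (hr.eventually_mem hnil).exists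
    exact NoethClosedAux.noeth_of_closed (r N) hN h
end

section
/- Let R be a commutative complete Hausdorff topological ring admitting a sequence of units converging to 0 and having a countable fundamental system of open neighbourhoods of 0. Let M be a finitely generated R-module, and let T and T' be two topologies on M each making M a Hausdorff, complete topological R-module with a countable fundamental system of open neighbourhoods of 0. Then T = T'. -/
/-- A topological abelian group (with explicitly given topology `t`) is sequentially
complete: every Cauchy sequence converges. -/
def SeqCompleteTop {M : Type*} [AddCommGroup M] (t : TopologicalSpace M) : Prop :=
  ∀ x : ℕ → M,
    (∀ U ∈ @nhds M t 0, ∃ K : ℕ, ∀ m ≥ K, ∀ k ≥ K, x m - x k ∈ U) →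
    ∃ y : M, Filter.Tendsto x Filter.atTop (@nhds M t y)


open Filter Topology Set Pointwise Uniformity

section Group
variable {G : Type*} [AddCommGroup G] [TopologicalSpace G] [IsTopologicalAddGroup G]

theorem exists_sym_half' {N : Set G} (hN : N ∈ 𝓝 (0 : G)) :
    ∃ V, V ∈ 𝓝 (0 : G) ∧ -V = V ∧ V + V ⊆ N := by
  obtain ⟨V₀, hV₀, hadd⟩ := exists_nhds_zero_half hN
  refine ⟨V₀ ∩ -V₀, inter_mem hV₀ (neg_mem_nhds_zero _ hV₀), by ext x; simp [and_comm], ?_⟩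
  intro x hx
  rw [Set.mem_add] at hx
  obtain ⟨a, ha, b, hb, rfl⟩ := hx
  exact hadd _ ha.1 _ hb.1

theorem closure_sub_closure' (A B : Set G) :
    closure A - closure B ⊆ closure (A - B) := by
  have h1 : closure A - closure B
      = (fun p : G × G => p.1 - p.2) '' (closure A ×ˢ closure B) := by
    rw [← Set.image2_sub, Set.image_prod]
  have h2 : A - B = (fun p : G × G => p.1 - p.2) '' (A ×ˢ B) := by
    rw [← Set.image2_sub, Set.image_prod]
  rw [h1, h2, ← closure_prod_eq]
  exact image_closure_subset_closure_image (continuous_fst.sub continuous_snd)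

theorem exists_sub_mem_of_mem_closure' {A V : Set G} {y : G} (hy : y ∈ closure A)
    (hV : V ∈ 𝓝 (0 : G)) : ∃ a ∈ A, y - a ∈ V := by
  have hmem : {x | y - x ∈ V} ∈ 𝓝 y := by
    have h : Tendsto (fun x : G => y - x) (𝓝 y) (𝓝 (y - y)) :=
      (continuous_const.sub continuous_id).tendsto y
    rw [sub_self] at h
    exact h hV
  obtain ⟨w, hw⟩ := mem_closure_iff_nhds.1 hy _ hmem
  exact ⟨w, hw.2, hw.1⟩

theorem closure_subset_add' {V : Set G} (hV : V ∈ 𝓝 (0 : G)) :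
    closure V ⊆ V + V := by
  intro z hz
  obtain ⟨a, haV, hd⟩ := exists_sub_mem_of_mem_closure' hz hV
  have := Set.add_mem_add hd haV
  simpa using this

end Group

section Main

variable {R : Type*} [CommRing R] [UniformSpace R] [IsTopologicalRing R] [IsUniformAddGroup R]
    [CompleteSpace R] [T2Space R] [FirstCountableTopology R]
    {M : Type*} [AddCommGroup M] [Module R M] [tM : TopologicalSpace M]
    [IsTopologicalAddGroup M] [ContinuousSMul R M]

theorem baire_aux [FirstCountableTopology M] (hcomp : SeqCompleteTop tM) :
    BaireSpace M := by
  letI u : UniformSpace M := IsTopologicalAddGroup.rightUniformSpace M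
  haveI : IsUniformAddGroup M := isUniformAddGroup_of_addCommGroup
  haveI hcg : (𝓤 M).IsCountablyGenerated := by
    rw [uniformity_eq_comap_nhds_zero]
    infer_instance
  haveI : CompleteSpace M := by
    apply UniformSpace.complete_of_cauchySeq_tendsto
    intro x hx
    apply hcomp x
    intro U hU
    have hU' : {p : M × M | p.2 - p.1 ∈ U} ∈ 𝓤 M := by
      rw [uniformity_eq_comap_nhds_zero]
      exact preimage_mem_comap hU
    obtain ⟨N, hN⟩ := cauchySeq_iff.1 hx _ hU'
    exact ⟨N, fun m hm k hk => hN k hk m hm⟩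
  letI : PseudoMetricSpace M := UniformSpace.pseudoMetricSpace M
  infer_instance

theorem aux_isOpen (hu : ∃ r : ℕ → Rˣ, Tendsto (fun n => (r n : R)) atTop (𝓝 0))
    [T2Space M] [FirstCountableTopology M]
    (hcomp : SeqCompleteTop tM)
    {n : ℕ} (π : (Fin n → R) →ₗ[R] M) (hsurj : Function.Surjective ⇑π)
    {S : Set M} (hS : IsOpen (⇑π ⁻¹' S)) : IsOpen S := by
  haveI : BaireSpace M := baire_aux hcomp
  have hπcont : Continuous ⇑π := LinearMap.continuous_on_pi π
  -- Step A
  have lemA : ∀ W ∈ 𝓝 (0 : Fin n → R), closure (⇑π '' W) ∈ 𝓝 (0 : M) := by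
    obtain ⟨r, hr⟩ := hu
    intro W₀ hW₀
    obtain ⟨V, hV, hVsym, hVadd⟩ := exists_sym_half' hW₀
    set A : Set M := ⇑π '' V with hA
    have hcover : (⋃ k, closure ((((r k)⁻¹ : Rˣ) : R) • A)) = univ := by
      ext m
      simp only [mem_iUnion, mem_univ, iff_true]
      obtain ⟨x, rfl⟩ := hsurj m
      have htd : Tendsto (fun k => ((r k : R)) • x) atTop (𝓝 0) := by
        have := hr.smul_const x
        simpa using this
      obtain ⟨k, hk⟩ := (htd.eventually_mem hV).exists
      refine ⟨k, subset_closure ?_⟩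
      refine ⟨⇑π ((r k : R) • x), ⟨(r k : R) • x, hk, rfl⟩, ?_⟩
      simp only [map_smul, smul_smul, Units.inv_mul, one_smul]
    obtain ⟨k, hk⟩ := nonempty_interior_of_iUnion_of_closed (fun k => isClosed_closure) hcover
    let e : M ≃ₜ M :=
      { toFun := fun m => (((r k)⁻¹ : Rˣ) : R) • m
        invFun := fun m => ((r k : Rˣ) : R) • m
        left_inv := fun m => by simp only [smul_smul, Units.mul_inv, one_smul]
        right_inv := fun m => by simp only [smul_smul, Units.inv_mul, one_smul]
        continuous_toFun := continuous_const_smul _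
        continuous_invFun := continuous_const_smul _ }
    have him : (((r k)⁻¹ : Rˣ) : R) • A = e '' A := (Set.image_smul).symm
    have hk2 : (interior (closure A)).Nonempty := by
      rw [him, ← e.image_closure, ← e.image_interior] at hk
      exact hk.of_image
    obtain ⟨a, ha⟩ := hk2
    have hacl : a ∈ closure A := interior_subset ha
    have hsub : (fun x => x - a) '' interior (closure A) ⊆ closure (⇑π '' W₀) := by
      rintro _ ⟨b, hb, rfl⟩
      have h1 : b - a ∈ closure A - closure A :=
        Set.sub_mem_sub (interior_subset hb) hacl
      have h2 : A - A ⊆ ⇑π '' W₀ := by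
        intro z hz
        rw [Set.mem_sub] at hz
        obtain ⟨p, hp, q, hq, rfl⟩ := hz
        obtain ⟨xp, hxp, rfl⟩ := hp
        obtain ⟨xq, hxq, rfl⟩ := hq
        refine ⟨xp - xq, ?_, map_sub π xp xq⟩
        apply hVadd
        rw [Set.mem_add]
        exact ⟨xp, hxp, -xq, by rw [← hVsym]; exact Set.neg_mem_neg.2 hxq, (sub_eq_add_neg xp xq).symm⟩
      exact closure_mono h2 (closure_sub_closure' A A h1)
    have hopen : IsOpen ((fun x => x - a) '' interior (closure A)) :=
      (Homeomorph.subRight a).isOpenMap _ isOpen_interior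
    refine mem_of_superset (hopen.mem_nhds ⟨a, ha, sub_self a⟩) hsub
  -- Step B
  have lemB : ∀ N ∈ 𝓝 (0 : Fin n → R), ⇑π '' N ∈ 𝓝 (0 : M) := by
    intro N hN
    obtain ⟨N₁, hN₁, hN₁sym, hN₁add⟩ := exists_sym_half' hN
    obtain ⟨N₂, hN₂, hN₂sym, hN₂add⟩ := exists_sym_half' hN₁
    obtain ⟨B, hB⟩ := (𝓝 (0 : Fin n → R)).exists_antitone_basis
    have hBmem : ∀ k, B k ∈ 𝓝 (0 : Fin n → R) := fun k => hB.mem k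
    have step : ∀ (k : ℕ) (T : Set (Fin n → R)), ∃ V,
        T ∈ 𝓝 (0 : Fin n → R) → (V ∈ 𝓝 (0 : Fin n → R) ∧ -V = V ∧ V + V ⊆ T ∩ B k) := by
      intro k T
      by_cases hT : T ∈ 𝓝 (0 : Fin n → R)
      · obtain ⟨V, h1, h2, h3⟩ := exists_sym_half' (inter_mem hT (hBmem k))
        exact ⟨V, fun _ => ⟨h1, h2, h3⟩⟩
      · exact ⟨univ, fun h => absurd h hT⟩
    choose F hF using step
    let W : ℕ → Set (Fin n → R) := fun k => Nat.rec (F 0 N₂) (fun k ih => F (k + 1) ih) k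
    have hWs : ∀ k, W (k + 1) = F (k + 1) (W k) := fun k => rfl
    have hWnhds : ∀ k, W k ∈ 𝓝 (0 : Fin n → R) := by
      intro k
      induction k with
      | zero => exact (hF 0 N₂ hN₂).1
      | succ k ih => rw [hWs]; exact (hF (k + 1) (W k) ih).1
    have hWsym : ∀ k, -(W k) = W k := by
      intro k
      cases k with
      | zero => exact (hF 0 N₂ hN₂).2.1
      | succ k => rw [hWs]; exact (hF (k + 1) (W k) (hWnhds k)).2.1
    have hWadd : ∀ k, W (k + 1) + W (k + 1) ⊆ W k ∩ B (k + 1) := by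
      intro k
      rw [hWs]
      exact (hF (k + 1) (W k) (hWnhds k)).2.2
    have hW0add : W 0 + W 0 ⊆ N₂ ∩ B 0 := (hF 0 N₂ hN₂).2.2
    have hself : ∀ k, W k ⊆ W k + W k := by
      intro k a ha
      rw [Set.mem_add]
      exact ⟨a, ha, 0, mem_of_mem_nhds (hWnhds k), add_zero a⟩
    suffices hcl : closure (⇑π '' W 0) ⊆ ⇑π '' N by
      exact mem_of_superset (lemA _ (hWnhds 0)) hcl
    intro y hy
    -- build the sequence
    have base : ∃ s₀, s₀ ∈ W 0 ∧ y - ⇑π s₀ ∈ closure (⇑π '' W 1) := by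
      obtain ⟨a, haA, hd⟩ := exists_sub_mem_of_mem_closure' hy (lemA _ (hWnhds 1))
      obtain ⟨x, hx, rfl⟩ := haA
      exact ⟨x, hx, hd⟩
    obtain ⟨s₀, hs₀W, hs₀cl⟩ := base
    have step2 : ∀ (k : ℕ) (s : Fin n → R), ∃ s',
        y - ⇑π s ∈ closure (⇑π '' W (k + 1)) →
        (s' - s ∈ W (k + 1) ∧ y - ⇑π s' ∈ closure (⇑π '' W (k + 2))) := by
      intro k s
      by_cases hs : y - ⇑π s ∈ closure (⇑π '' W (k + 1))
      · obtain ⟨a, haA, hd⟩ := exists_sub_mem_of_mem_closure' hs (lemA _ (hWnhds (k + 2)))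
        obtain ⟨x, hx, rfl⟩ := haA
        refine ⟨s + x, fun _ => ⟨by simpa using hx, ?_⟩⟩
        rw [map_add]
        have : y - (⇑π s + ⇑π x) = y - ⇑π s - ⇑π x := by abel
        rwa [this]
      · exact ⟨s, fun h => absurd h hs⟩
    choose g hg using step2
    let seq : ℕ → Fin n → R := fun k => Nat.rec s₀ (fun k ih => g k ih) k
    have hseq0 : seq 0 = s₀ := rfl
    have hseqs : ∀ k, seq (k + 1) = g k (seq k) := fun k => rfl
    have hseqQ : ∀ k, y - ⇑π (seq k) ∈ closure (⇑π '' W (k + 1)) := by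
      intro k
      induction k with
      | zero => exact hs₀cl
      | succ k ih => rw [hseqs]; exact (hg k (seq k) ih).2
    have hseqd : ∀ k, seq (k + 1) - seq k ∈ W (k + 1) := by
      intro k
      rw [hseqs]
      exact (hg k (seq k) (hseqQ k)).1
    have htel : ∀ j k, seq (k + j) - seq k ∈ W k := by
      intro j
      induction j with
      | zero => intro k; simpa using mem_of_mem_nhds (hWnhds k)
      | succ j ih =>
        intro k
        have h1 : seq (k + 1 + j) - seq (k + 1) ∈ W (k + 1) := ih (k + 1)
        have h2 : seq (k + 1) - seq k ∈ W (k + 1) := hseqd k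
        have h3 := (hWadd k (Set.add_mem_add h1 h2)).1
        rw [sub_add_sub_cancel] at h3
        have e : k + (j + 1) = k + 1 + j := by omega
        rwa [e]
    have hcauchy : CauchySeq seq := by
      rw [cauchySeq_iff]
      intro V hV
      rw [uniformity_eq_comap_nhds_zero] at hV
      obtain ⟨U, hU, hUV⟩ := hV
      obtain ⟨k, -, hkU⟩ := hB.toHasBasis.mem_iff.1 hU
      refine ⟨k + 1, fun a ha b hb => ?_⟩
      have h1 : seq a - seq (k + 1) ∈ W (k + 1) := by
        have := htel (a - (k + 1)) (k + 1)
        rwa [Nat.add_sub_cancel' ha] at this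
      have h2 : seq b - seq (k + 1) ∈ W (k + 1) := by
        have := htel (b - (k + 1)) (k + 1)
        rwa [Nat.add_sub_cancel' hb] at this
      have h1' : -(seq a - seq (k + 1)) ∈ W (k + 1) := by
        rw [← hWsym (k + 1)]
        exact Set.neg_mem_neg.2 h1
      have h3 := (hWadd k (Set.add_mem_add h2 h1')).2
      have e : seq b - seq (k + 1) + -(seq a - seq (k + 1)) = seq b - seq a := by abel
      rw [e] at h3
      apply hUV
      have : seq b - seq a ∈ B k := hB.antitone (Nat.le_succ k) h3
      exact hkU this
    obtain ⟨x, hx⟩ := cauchySeq_tendsto_of_complete hcauchy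
    have hxW : x - seq 0 ∈ closure (W 0) := by
      have htd : Tendsto (fun m => seq m - seq 0) atTop (𝓝 (x - seq 0)) :=
        hx.sub tendsto_const_nhds
      have hmem : ∀ m, seq m - seq 0 ∈ W 0 := by
        intro m
        simpa using htel m 0
      exact mem_closure_of_tendsto htd (Eventually.of_forall hmem)
    have hxN : x ∈ N := by
      have h1 : x - seq 0 ∈ W 0 + W 0 := closure_subset_add' (hWnhds 0) hxW
      have h2 : x - seq 0 ∈ N₂ := (hW0add h1).1
      have h3 : seq 0 ∈ N₂ := (hW0add (hself 0 hs₀W)).1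
      have h4 : x ∈ N₂ + N₂ := by
        have := Set.add_mem_add h2 h3
        simpa using this
      have h5 : x ∈ N₁ := hN₂add h4
      have h6 := hN₁add (Set.add_mem_add h5 (mem_of_mem_nhds hN₁))
      simpa using h6
    have hπs : Tendsto (fun m => ⇑π (seq m)) atTop (𝓝 (⇑π x)) :=
      (hπcont.tendsto x).comp hx
    have hkey : Tendsto (fun m => y - ⇑π (seq m)) atTop (𝓝 (0 : M)) := by
      rw [tendsto_iff_forall_eventually_mem]
      intro Q hQ
      obtain ⟨Q', hQ'mem, hQ'closed, hQ'sub⟩ := exists_mem_nhds_isClosed_subset hQ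
      have hpre : ⇑π ⁻¹' Q' ∈ 𝓝 (0 : Fin n → R) := by
        have h0 : Tendsto ⇑π (𝓝 (0 : Fin n → R)) (𝓝 (0 : M)) := by
          have := hπcont.tendsto 0
          rwa [map_zero] at this
        exact h0 hQ'mem
      obtain ⟨k, -, hk⟩ := hB.toHasBasis.mem_iff.1 hpre
      filter_upwards [eventually_ge_atTop k] with m hm
      have hWk : W (m + 1) ⊆ B k := by
        intro a ha
        have h1 : a ∈ B (m + 1) := (hWadd m (hself (m + 1) ha)).2
        exact hB.antitone (le_trans hm (Nat.le_succ m)) h1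
      have himg : ⇑π '' W (m + 1) ⊆ Q' := by
        rintro _ ⟨w, hw, rfl⟩
        exact hk (hWk hw)
      have hclQ : closure (⇑π '' W (m + 1)) ⊆ Q' := hQ'closed.closure_subset_iff.2 himg
      exact hQ'sub (hclQ (hseqQ m))
    have hπy : Tendsto (fun m => ⇑π (seq m)) atTop (𝓝 y) := by
      have h := (tendsto_const_nhds (x := y) (f := (atTop : Filter ℕ))).sub hkey
      simpa using h
    have hxy : ⇑π x = y := tendsto_nhds_unique hπs hπy
    exact ⟨x, hxN, hxy⟩
  -- conclusion
  rw [isOpen_iff_mem_nhds]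
  intro y hyS
  obtain ⟨x, rfl⟩ := hsurj y
  set U : Set (Fin n → R) := (fun z => z + x) ⁻¹' (⇑π ⁻¹' S) with hUdef
  have hUopen : IsOpen U := hS.preimage (continuous_id.add continuous_const)
  have hU0 : U ∈ 𝓝 (0 : Fin n → R) := by
    apply hUopen.mem_nhds
    show ⇑π (0 + x) ∈ S
    rwa [zero_add]
  have himg : ⇑π '' U = (fun m => m + ⇑π x) ⁻¹' S := by
    ext m
    constructor
    · rintro ⟨z, hz, rfl⟩
      have hz' : ⇑π (z + x) ∈ S := hz
      rw [map_add] at hz'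
      exact hz'
    · intro hm
      obtain ⟨z, rfl⟩ := hsurj m
      refine ⟨z, ?_, rfl⟩
      show ⇑π (z + x) ∈ S
      rw [map_add]
      exact hm
  have hnb : (fun m => m + ⇑π x) ⁻¹' S ∈ 𝓝 (0 : M) := himg ▸ lemB U hU0
  have hmap := (Homeomorph.addRight (⇑π x)).map_nhds_eq (0 : M)
  rw [show (Homeomorph.addRight (⇑π x)) 0 = ⇑π x by simp] at hmap
  rw [← hmap]
  exact mem_map.2 hnb

theorem unique_aux {R : Type*} [CommRing R] [UniformSpace R] [IsTopologicalRing R]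
    [IsUniformAddGroup R] [CompleteSpace R] [T2Space R] [FirstCountableTopology R]
    (hu : ∃ r : ℕ → Rˣ, Filter.Tendsto (fun n => (r n : R)) Filter.atTop (nhds 0))
    {M : Type*} [AddCommGroup M] [Module R M] [Module.Finite R M]
    (t t' : TopologicalSpace M)
    (ht₁ : @IsTopologicalAddGroup M t _) (ht₂ : @ContinuousSMul R M _ _ t)
    (ht₃ : @T2Space M t) (ht₄ : @FirstCountableTopology M t)
    (ht₅ : SeqCompleteTop t)
    (ht'₁ : @IsTopologicalAddGroup M t' _) (ht'₂ : @ContinuousSMul R M _ _ t')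
    (ht'₃ : @T2Space M t') (ht'₄ : @FirstCountableTopology M t')
    (ht'₅ : SeqCompleteTop t') :
    t = t' := by
  obtain ⟨n, π, hsurj⟩ := Module.Finite.exists_fin' R M
  have hcont : ∀ (τ : TopologicalSpace M), @IsTopologicalAddGroup M τ _ →
      @ContinuousSMul R M _ _ τ → @Continuous _ _ _ τ ⇑π := by
    intro τ h1 h2
    letI := τ
    haveI := h1
    haveI := h2
    exact LinearMap.continuous_on_pi π
  have hopen : ∀ (τ : TopologicalSpace M), @IsTopologicalAddGroup M τ _ →
      @ContinuousSMul R M _ _ τ → @T2Space M τ → @FirstCountableTopology M τ →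
      SeqCompleteTop τ → ∀ S : Set M, IsOpen (⇑π ⁻¹' S) → @IsOpen M τ S := by
    intro τ h1 h2 h3 h4 h5 S hS
    letI := τ
    haveI := h1
    haveI := h2
    haveI := h3
    haveI := h4
    exact aux_isOpen hu h5 π hsurj hS
  apply TopologicalSpace.ext_iff.mpr
  intro S
  constructor
  · intro hS
    exact hopen t' ht'₁ ht'₂ ht'₃ ht'₄ ht'₅ S
      (@Continuous.isOpen_preimage _ _ _ t _ (hcont t ht₁ ht₂) S hS)
  · intro hS
    exact hopen t ht₁ ht₂ ht₃ ht₄ ht₅ S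
      (@Continuous.isOpen_preimage _ _ _ t' _ (hcont t' ht'₁ ht'₂) S hS)

end Main

/-- Over a commutative complete Hausdorff first-countable topological ring with a
sequence of units converging to `0`, any two topologies on a finitely generated
`R`-module which make it a Hausdorff, complete topological `R`-module with a countable
fundamental system of neighbourhoods of `0` coincide. -/
theorem unique_complete_module_topology
    {R : Type*} [CommRing R] [UniformSpace R] [IsTopologicalRing R] [IsUniformAddGroup R]
    [CompleteSpace R] [T2Space R] [FirstCountableTopology R]
    (hu : ∃ r : ℕ → Rˣ, Filter.Tendsto (fun n => (r n : R)) Filter.atTop (nhds 0))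
    {M : Type*} [AddCommGroup M] [Module R M] [Module.Finite R M]
    (t t' : TopologicalSpace M)
    (ht₁ : @IsTopologicalAddGroup M t _) (ht₂ : @ContinuousSMul R M _ _ t)
    (ht₃ : @T2Space M t) (ht₄ : @FirstCountableTopology M t)
    (ht₅ : SeqCompleteTop t)
    (ht'₁ : @IsTopologicalAddGroup M t' _) (ht'₂ : @ContinuousSMul R M _ _ t')
    (ht'₃ : @T2Space M t') (ht'₄ : @FirstCountableTopology M t')
    (ht'₅ : SeqCompleteTop t') :
    t = t' := by
  exact unique_aux hu t t' ht₁ ht₂ ht₃ ht₄ ht₅ ht'₁ ht'₂ ht'₃ ht'₄ ht'₅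
end
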